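/- arXiv:1307.3019 — 4 statements merged into one kernel-verified Lean document; each statement's English description precedes it below -/
import Mathlib

section
/- Let q ≡ 1 (mod 6) be a prime power, ω a primitive cube root of unity in F_q, W an F_q-vector space, and {x, y, z} a set of three distinct vectors with x + y + z = 0 and x, y linearly independent. Set u₀ = (1 − ω²)(ωx − y)/3 and v₀ = (1 − ω²)(ωy − x)/3. Then u₀ and v₀ are linearly independent and T(u₀, v₀) = {x, y, z}. -/
/-- The triple `T(u,v) = {u+v, ωu+ω²v, ω²u+ωv}`. -/
def Ttriple {F W : Type*} [Field F] [AddCommGroup W] [Module F W]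
    (ω : F) (u v : W) : Set W :=
  {u + v, ω • u + ω ^ 2 • v, ω ^ 2 • u + ω • v}

lemma cast_ne_zero_of_card (F : Type*) [Field F] [Fintype F]
    (hq : Fintype.card F % 6 = 1) (k : ℕ) (hk6 : k ∣ 6) : (k : F) ≠ 0 := by
  intro h
  set p := ringChar F with hp
  obtain ⟨n, hpp, hcard⟩ := FiniteField.card F p
  have hdvd : p ∣ k := (CharP.cast_eq_zero_iff F p k).mp h
  have hpk : p ∣ Fintype.card F := by
    rw [hcard]; exact dvd_pow_self p n.pos.ne'
  have h6 : p ∣ 6 := hdvd.trans hk6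
  have h0 : Fintype.card F % p = 0 := by
    obtain ⟨m, hm⟩ := hpk; rw [hm]; exact Nat.mul_mod_right p m
  have hmm := Nat.mod_mod_of_dvd (Fintype.card F) h6
  rw [hq] at hmm
  have h2 : 1 % p = 1 := Nat.one_mod_eq_one.mpr hpp.one_lt.ne'
  omega


/-- For a zero-sum triple `{x,y,z}` of distinct vectors with `x, y` linearly
independent, setting `u₀ = (1-ω²)(ωx-y)/3` and `v₀ = (1-ω²)(ωy-x)/3`, the vectors
`u₀, v₀` are linearly independent and `T(u₀,v₀) = {x,y,z}`. -/
theorem Ttriple_surjective (F : Type*) [Field F] [Fintype F]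
    (hq : Fintype.card F % 6 = 1) (ω : F) (hω : ω ≠ 1 ∧ ω ^ 3 = 1)
    (W : Type*) [AddCommGroup W] [Module F W] (x y z : W)
    (hxy : x ≠ y) (hyz : y ≠ z) (hxz : x ≠ z)
    (hsum : x + y + z = 0) (hind : LinearIndependent F ![x, y]) :
    LinearIndependent F
        ![((1 - ω ^ 2) / 3) • (ω • x - y), ((1 - ω ^ 2) / 3) • (ω • y - x)] ∧
      Ttriple ω (((1 - ω ^ 2) / 3) • (ω • x - y)) (((1 - ω ^ 2) / 3) • (ω • y - x)) =
        {x, y, z} := by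
  obtain ⟨hω1, hω3⟩ := hω
  have h3 : (3 : F) ≠ 0 := by
    have := cast_ne_zero_of_card F hq 3 (by norm_num)
    simpa using this
  have hs : ω ^ 2 + ω + 1 = 0 := by
    have hmul : (ω - 1) * (ω ^ 2 + ω + 1) = 0 := by linear_combination hω3
    rcases mul_eq_zero.mp hmul with h | h
    · exact absurd (by linear_combination h) hω1
    · exact h
  have hω21 : ω ^ 2 ≠ 1 := by
    intro h
    exact hω1 (by linear_combination hω3 - ω * h)
  have hc : (1 - ω ^ 2) / 3 ≠ 0 := div_ne_zero (sub_ne_zero.mpr hω21.symm) h3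
  set c : F := (1 - ω ^ 2) / 3 with hcdef
  have hz : z = -(x + y) := eq_neg_of_add_eq_zero_right hsum
  have k1 : c * (ω - 1) = -1 := by
    rw [hcdef]; field_simp; linear_combination hs - hω3
  have k2 : c * (1 - ω) = 1 := by linear_combination -k1
  have e1 : c • (ω • x - y) + c • (ω • y - x) = z := by
    rw [hz]
    match_scalars <;> linear_combination k1
  have e2 : ω • (c • (ω • x - y)) + ω ^ 2 • (c • (ω • y - x)) = y := by
    match_scalars
    · ring
    · linear_combination c * hω3 + k2
  have e3 : ω ^ 2 • (c • (ω • x - y)) + ω • (c • (ω • y - x)) = x := by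
    match_scalars
    · linear_combination c * hω3 + k2
    · ring
  constructor
  · rw [LinearIndependent.pair_iff]
    intro s t hst
    have key : (s * (c * ω) - t * c) • x + (t * (c * ω) - s * c) • y = 0 := by
      rw [← hst]; module
    obtain ⟨ha, hb⟩ := LinearIndependent.pair_iff.mp hind _ _ key
    have hne : c * (ω ^ 2 - 1) ≠ 0 := mul_ne_zero hc (sub_ne_zero.mpr hω21)
    have hs0 : s = 0 := by
      have hh : s * (c * (ω ^ 2 - 1)) = 0 := by linear_combination ω * ha + hb
      exact (mul_eq_zero.mp hh).resolve_right hne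
    have ht0 : t = 0 := by
      have hh : t * c = 0 := by linear_combination -ha + (c * ω) * hs0
      exact (mul_eq_zero.mp hh).resolve_right hc
    exact ⟨hs0, ht0⟩
  · show ({_, _, _} : Set W) = _
    rw [e1, e2, e3]
    ext w
    simp only [Set.mem_insert_iff, Set.mem_singleton_iff]
    tauto
end

section
/- Let q = 6t + 1 be a prime power, g a primitive root of F_q, ω = g^{2t}, and let L be a 2-dimensional F_q-vector space with a nondegenerate alternating bilinear form f: L × L → F_q. Fix a nonzero u ∈ L, let K = span(u), and fix c ∈ F_q^*. Then the q(q−1)/3 triples ±T(u,v) = {±(u+v), ±(ωu+ω²v), ±(ω²u+ωv)}, taken over all v ∈ L with f(u,v) ∈ {g^m c : 0 ≤ m < t}, form a partition of L ∖ K. -/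
set_option maxHeartbeats 1000000 in
/-- Lemma 2.2: on a 2-dimensional space `L` with a nondegenerate alternating form
`f`, a fixed nonzero `u` (spanning `K`) and `c ≠ 0`, the `q(q-1)/3` triples
`±T(u,v)` with `f(u,v) ∈ {gᵐc : 0 ≤ m < t}` partition `L ∖ K`. -/
theorem partial_parallel_class_partition (F : Type*) [Field F] [Fintype F]
    (t : ℕ) (hq : Fintype.card F = 6 * t + 1)
    (g : F) (hg : ∀ x : F, x ≠ 0 → ∃ k : ℕ, g ^ k = x)
    (L : Type*) [AddCommGroup L] [Module F L] (hdim : Module.finrank F L = 2)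
    (f : L →ₗ[F] L →ₗ[F] F) (halt : ∀ x, f x x = 0)
    (hnd : ∀ x, (∀ y, f x y = 0) → x = 0)
    (u : L) (hu : u ≠ 0) (c : F) (hc : c ≠ 0) :
    ∀ 𝒯 : Set (Set L),
      𝒯 = {S | ∃ v : L, (∃ m < t, f u v = g ^ m * c) ∧
        (S = Ttriple (g ^ (2 * t)) u v ∨ S = -Ttriple (g ^ (2 * t)) u v)} →
      𝒯.ncard = Fintype.card F * (Fintype.card F - 1) / 3 ∧
      (∀ S ∈ 𝒯, S.ncard = 3) ∧
      𝒯.PairwiseDisjoint id ∧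
      ⋃₀ 𝒯 = {x : L | x ∉ Submodule.span F {u}} := by
  classical
  intro 𝒯 h𝒯
  subst h𝒯
  -- basic numerics
  have ht : 1 ≤ t := by
    have h2 : (1:ℕ) < Fintype.card F := Fintype.one_lt_card
    omega
  -- g ≠ 0
  have hg0 : g ≠ 0 := by
    have hcard : ¬ (Finset.univ : Finset F) ⊆ {0, 1} := by
      intro hsub
      have h1 := Finset.card_le_card hsub
      simp only [Finset.card_univ, hq] at h1
      have h2 : ({0, 1} : Finset F).card ≤ 2 := by
        apply le_trans (Finset.card_insert_le _ _); simp
      omega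
    rw [Finset.not_subset] at hcard
    obtain ⟨a, -, ha⟩ := hcard
    simp only [Finset.mem_insert, Finset.mem_singleton, not_or] at ha
    obtain ⟨k, hk⟩ := hg (a) ha.1
    rintro rfl
    rcases Nat.eq_zero_or_pos k with rfl | hk0
    · simp at hk; exact ha.2 hk.symm
    · rw [zero_pow (by omega)] at hk; exact ha.1 hk.symm
  -- order of g
  have hpow : ∀ a b : ℕ, g ^ a = g ^ b ↔ a ≡ b [MOD 6 * t] := by
    set gu : Fˣ := Units.mk0 g hg0 with hgu
    have hord : orderOf gu = 6 * t := by
      have : ∀ x : Fˣ, x ∈ Subgroup.zpowers gu := by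
        intro x
        obtain ⟨k, hk⟩ := hg x.val x.ne_zero
        exact ⟨(k:ℤ), by ext; push_cast; simpa [hgu] using hk⟩
      rw [orderOf_eq_card_of_forall_mem_zpowers this, Nat.card_eq_fintype_card, Fintype.card_units, hq]
      omega
    intro a b
    rw [show (g ^ a = g ^ b) ↔ (gu ^ a = gu ^ b) by
      constructor
      · intro h; ext; push_cast; simpa [hgu] using h
      · intro h; simpa [hgu] using congrArg Units.val h]
    rw [pow_eq_pow_iff_modEq, hord]
  have hpow_lt : ∀ a b : ℕ, a < 6 * t → b < 6 * t → (g ^ a = g ^ b ↔ a = b) := by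
    intro a b ha hb
    rw [hpow]
    unfold Nat.ModEq
    rw [Nat.mod_eq_of_lt ha, Nat.mod_eq_of_lt hb]
  set η := g ^ t with hη
  have hηpow : ∀ i : ℕ, η ^ i = g ^ (t * i) := fun i => by rw [hη, ← pow_mul]
  have hη6 : η ^ 6 = 1 := by
    rw [hηpow, show (1:F) = g ^ 0 from (pow_zero g).symm, hpow]
    simpa [Nat.modEq_zero_iff_dvd] using ⟨1, by ring⟩
  have hη0 : ∀ i : ℕ, η ^ i ≠ 0 := fun i => pow_ne_zero i (pow_ne_zero t hg0)
  have hη3 : η ^ 3 = -1 := by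
    have h2 : η ^ 3 * η ^ 3 = 1 := by rw [← pow_add]; exact hη6
    rcases mul_self_eq_one_iff.mp h2 with h | h
    · exfalso
      rw [hηpow, show (1:F) = g ^ 0 from (pow_zero g).symm, hpow_lt _ _ (by omega) (by omega)] at h
      omega
    · exact h
  have hω2 : g ^ (2 * t) = η ^ 2 := by rw [hηpow]; ring_nf
  -- finite dimensionality
  haveI hFD : FiniteDimensional F L := FiniteDimensional.of_finrank_pos (by omega)
  haveI hLfin : Finite L := Module.finite_of_finite F
  -- kernel of f u is span of u
  have hfu0 : (f u : L →ₗ[F] F) ≠ 0 := by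
    intro h
    exact hu (hnd u (fun y => by rw [h]; rfl))
  have hker : ∀ x : L, f u x = 0 ↔ x ∈ Submodule.span F {u} := by
    have hle : Submodule.span F {u} ≤ LinearMap.ker (f u) := by
      rw [Submodule.span_le, Set.singleton_subset_iff]
      exact halt u
    have h1 : Module.finrank F (LinearMap.ker (f u)) = 1 := by
      have := Module.Dual.finrank_ker_add_one_of_ne_zero hfu0
      omega
    have heq : Submodule.span F {u} = LinearMap.ker (f u) :=
      Submodule.eq_of_le_of_finrank_eq hle (by rw [finrank_span_singleton hu, h1])
    intro x
    rw [heq]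
    exact (LinearMap.mem_ker).symm
  -- the uniqueness lemma
  have huniq : ∀ (v v' : L) (m m' i i' : ℕ), m < t → m' < t → i < 6 → i' < 6 →
      f u v = g ^ m * c → f u v' = g ^ m' * c →
      η ^ i • u + η ^ (6 - i) • v = η ^ i' • u + η ^ (6 - i') • v' →
      i = i' ∧ v = v' := by
    intro v v' m m' i i' hm hm' hi hi' hv hv' heq
    have happ := congrArg (f u) heq
    simp only [map_add, map_smul, halt u, smul_eq_mul, mul_zero, zero_add] at happ
    rw [hv, hv'] at happ
    -- reduce exponents mod 6
    have hmod : ∀ a : ℕ, η ^ a = η ^ (a % 6) := by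
      intro a
      conv_lhs => rw [show a = 6 * (a / 6) + a % 6 by omega]
      rw [pow_add, pow_mul, hη6, one_pow, one_mul]
    rw [hmod (6 - i), hmod (6 - i')] at happ
    have happ2 : g ^ (t * ((6-i) % 6) + m) = g ^ (t * ((6-i') % 6) + m') := by
      have h3 : (η ^ ((6-i) % 6) * g ^ m) * c = (η ^ ((6-i') % 6) * g ^ m') * c := by
        rw [mul_assoc, mul_assoc]; exact happ
      have h4 := mul_right_cancel₀ hc h3
      rwa [hηpow, hηpow, ← pow_add, ← pow_add] at h4
    have hj : (6-i) % 6 = (6-i') % 6 ∧ m = m' := by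
      have hlt1 : t * ((6-i) % 6) + m < 6 * t := by have : (6-i) % 6 < 6 := Nat.mod_lt _ (by omega); nlinarith
      have hlt2 : t * ((6-i') % 6) + m' < 6 * t := by have : (6-i') % 6 < 6 := Nat.mod_lt _ (by omega); nlinarith
      have heq2 := (hpow_lt _ _ hlt1 hlt2).mp happ2
      have h1 : (6-i) % 6 < 6 := Nat.mod_lt _ (by omega)
      have h2 : (6-i') % 6 < 6 := Nat.mod_lt _ (by omega)
      set a := (6-i) % 6
      set b := (6-i') % 6
      clear_value a b
      interval_cases a <;> interval_cases b <;> omega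
    have hii' : i = i' := by omega
    subst hii'
    refine ⟨rfl, ?_⟩
    have hveq : η ^ (6 - i) • v = η ^ (6 - i) • v' := by
      have := add_left_cancel heq
      exact this
    exact smul_right_injective L (hη0 (6-i)) hveq
  -- membership characterizations
  have hmemT : ∀ v x, x ∈ Ttriple (g ^ (2*t)) u v ↔
      ∃ i, (i = 0 ∨ i = 2 ∨ i = 4) ∧ x = η ^ i • u + η ^ (6 - i) • v := by
    intro v x
    have hω4 : ((η:F) ^ 2) ^ 2 = η ^ 4 := by rw [← pow_mul]
    simp only [Ttriple, Set.mem_insert_iff, Set.mem_singleton_iff, hω2, hω4]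
    constructor
    · rintro (rfl | rfl | rfl)
      · exact ⟨0, by tauto, by norm_num [hη6]⟩
      · exact ⟨2, by tauto, by norm_num⟩
      · exact ⟨4, by tauto, by norm_num⟩
    · rintro ⟨i, (rfl | rfl | rfl), rfl⟩
      · left; norm_num [hη6]
      · right; left; norm_num
      · right; right; norm_num
  have hmemN : ∀ v x, x ∈ -Ttriple (g ^ (2*t)) u v ↔
      ∃ i, (i = 1 ∨ i = 3 ∨ i = 5) ∧ x = η ^ i • u + η ^ (6 - i) • v := by
    intro v x
    rw [Set.mem_neg, hmemT]
    constructor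
    · rintro ⟨j, hj, hx⟩
      have hx' : x = -(η ^ j • u + η ^ (6 - j) • v) := by rw [← hx, neg_neg]
      rcases hj with rfl | rfl | rfl
      · refine ⟨3, by tauto, ?_⟩
        rw [hx']
        match_scalars
        · linear_combination (-1 : F) * hη3
        · linear_combination (-η^3 : F) * hη3
      · refine ⟨5, by tauto, ?_⟩
        rw [hx']
        match_scalars
        · linear_combination (-η^2 : F) * hη3
        · linear_combination (-η : F) * hη3
      · refine ⟨1, by tauto, ?_⟩
        rw [hx']
        match_scalars
        · linear_combination (-η : F) * hη3
        · linear_combination (-η^2 : F) * hη3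
    · rintro ⟨i, hi, rfl⟩
      rcases hi with rfl | rfl | rfl
      · refine ⟨4, by tauto, ?_⟩
        match_scalars
        · linear_combination (-η : F) * hη3
        · linear_combination (-η^2 : F) * hη3
      · refine ⟨0, by tauto, ?_⟩
        match_scalars
        · linear_combination (-1 : F) * hη3
        · linear_combination (-η^3 : F) * hη3
      · refine ⟨2, by tauto, ?_⟩
        match_scalars
        · linear_combination (-η^2 : F) * hη3
        · linear_combination (-η : F) * hη3
  have hmem : ∀ v x, (x ∈ Ttriple (g ^ (2*t)) u v ∨ x ∈ -Ttriple (g ^ (2*t)) u v) ↔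
      ∃ i, i < 6 ∧ x = η ^ i • u + η ^ (6 - i) • v := by
    intro v x
    rw [hmemT, hmemN]
    constructor
    · rintro (⟨i, hi, rfl⟩ | ⟨i, hi, rfl⟩) <;> exact ⟨i, by omega, rfl⟩
    · rintro ⟨i, hi, rfl⟩
      interval_cases i
      · exact Or.inl ⟨0, by norm_num, rfl⟩
      · exact Or.inr ⟨1, by norm_num, rfl⟩
      · exact Or.inl ⟨2, by norm_num, rfl⟩
      · exact Or.inr ⟨3, by norm_num, rfl⟩
      · exact Or.inl ⟨4, by norm_num, rfl⟩
      · exact Or.inr ⟨5, by norm_num, rfl⟩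
  -- explicit representations of the three elements of a triple
  have e0 : ∀ v : L, u + v = η ^ 0 • u + η ^ (6 - 0) • v := by
    intro v; norm_num [hη6]
  have e2 : ∀ v : L, g ^ (2*t) • u + (g ^ (2*t)) ^ 2 • v = η ^ 2 • u + η ^ (6 - 2) • v := by
    intro v; rw [hω2]; norm_num [← pow_mul]
  have e4 : ∀ v : L, (g ^ (2*t)) ^ 2 • u + g ^ (2*t) • v = η ^ 4 • u + η ^ (6 - 4) • v := by
    intro v; rw [hω2]; norm_num [← pow_mul]
  have e3mem : ∀ v : L, η ^ 3 • u + η ^ (6 - 3) • v ∈ -Ttriple (g ^ (2*t)) u v := by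
    intro v; exact (hmemN v _).mpr ⟨3, by tauto, rfl⟩
  -- the union of the triples
  have hunion : ⋃₀ {S | ∃ v, (∃ m < t, f u v = g ^ m * c) ∧
        (S = Ttriple (g ^ (2 * t)) u v ∨ S = -Ttriple (g ^ (2 * t)) u v)} =
      {x : L | x ∉ Submodule.span F {u}} := by
    ext x
    simp only [Set.mem_sUnion, Set.mem_setOf_eq]
    constructor
    · rintro ⟨S, ⟨v, ⟨m, hm, hfv⟩, hS⟩, hxS⟩
      have hrep : ∃ i, i < 6 ∧ x = η ^ i • u + η ^ (6 - i) • v := by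
        refine (hmem v x).mp ?_
        rcases hS with rfl | rfl
        · exact Or.inl hxS
        · exact Or.inr hxS
      obtain ⟨i, hi, rfl⟩ := hrep
      intro hsp
      have h0 := (hker _).mpr hsp
      rw [map_add, map_smul, map_smul, halt u, smul_eq_mul, smul_eq_mul, mul_zero,
        zero_add, hfv] at h0
      exact (mul_ne_zero (hη0 _) (mul_ne_zero (pow_ne_zero _ hg0) hc)) h0
    · intro hx
      have hfx : f u x ≠ 0 := fun h => hx ((hker x).mp h)
      obtain ⟨k₀, hk₀⟩ := hg (f u x * c⁻¹) (mul_ne_zero hfx (inv_ne_zero hc))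
      set j := k₀ % (6*t) with hjdef
      have hj6 : j < 6*t := Nat.mod_lt _ (by omega)
      have hgj : g ^ j * c = f u x := by
        have : g ^ j = g ^ k₀ := (hpow j k₀).mpr (Nat.mod_modEq _ _)
        rw [this, hk₀, inv_mul_cancel_right₀ hc]
      set m := j % t with hmdef
      set k := j / t with hkdef
      have hm : m < t := Nat.mod_lt _ (by omega)
      have hk6 : k < 6 := by
        rw [hkdef]
        rw [Nat.div_lt_iff_lt_mul (by omega)]
        omega
      have hdm : t * k + m = j := Nat.div_add_mod j t
      set i := (6 - k) % 6 with hidef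
      have hi6 : i < 6 := Nat.mod_lt _ (by norm_num)
      set v := η ^ i • x - η ^ (2*i) • u with hvdef
      have hfv : f u v = g ^ m * c := by
        rw [hvdef, map_sub, map_smul, map_smul, halt u, smul_eq_mul, smul_eq_mul,
          mul_zero, sub_zero, ← hgj, hηpow, ← mul_assoc, ← pow_add]
        have hik : t * i + j = m ∨ t * i + j = 6*t + m := by
          interval_cases k <;> simp only [hidef] <;> omega
        rcases hik with h | h
        · rw [h]
        · rw [h, pow_add, show g ^ (6*t) = 1 by rw [show 6*t = t*6 by ring, ← hηpow]; exact hη6,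
            one_mul]
      have hrep : x = η ^ i • u + η ^ (6 - i) • v := by
        rw [hvdef, smul_sub, smul_smul, smul_smul, ← pow_add, ← pow_add,
          show 6 - i + i = 6 by omega, show 6 - i + 2*i = 6 + i by omega,
          hη6, one_smul, pow_add, hη6, one_mul]
        abel
      rcases (hmem v x).mpr ⟨i, hi6, hrep⟩ with h | h
      · exact ⟨_, ⟨v, ⟨m, hm, hfv⟩, Or.inl rfl⟩, h⟩
      · exact ⟨_, ⟨v, ⟨m, hm, hfv⟩, Or.inr rfl⟩, h⟩
  -- sizes of the triples
  have hsize : ∀ S ∈ {S | ∃ v, (∃ m < t, f u v = g ^ m * c) ∧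
        (S = Ttriple (g ^ (2 * t)) u v ∨ S = -Ttriple (g ^ (2 * t)) u v)}, S.ncard = 3 := by
    have hTcard : ∀ v : L, (∃ m < t, f u v = g ^ m * c) → (Ttriple (g ^ (2*t)) u v).ncard = 3 := by
      rintro v ⟨m, hm, hfv⟩
      have key : ∀ i i' : ℕ, i < 6 → i' < 6 → i ≠ i' →
          η ^ i • u + η ^ (6 - i) • v ≠ η ^ i' • u + η ^ (6 - i') • v := by
        intro i i' hi hi' hne h
        exact hne (huniq v v m m i i' hm hm hi hi' hfv hfv h).1
      have hab : u + v ≠ g ^ (2*t) • u + (g ^ (2*t)) ^ 2 • v := by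
        rw [e0, e2]; exact key 0 2 (by norm_num) (by norm_num) (by norm_num)
      have hac : u + v ≠ (g ^ (2*t)) ^ 2 • u + g ^ (2*t) • v := by
        rw [e0, e4]; exact key 0 4 (by norm_num) (by norm_num) (by norm_num)
      have hbc : g ^ (2*t) • u + (g ^ (2*t)) ^ 2 • v ≠ (g ^ (2*t)) ^ 2 • u + g ^ (2*t) • v := by
        rw [e2, e4]; exact key 2 4 (by norm_num) (by norm_num) (by norm_num)
      show ({u + v, g ^ (2*t) • u + (g ^ (2*t)) ^ 2 • v,
        (g ^ (2*t)) ^ 2 • u + g ^ (2*t) • v} : Set L).ncard = 3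
      rw [Set.ncard_insert_of_notMem (by
        simp only [Set.mem_insert_iff, Set.mem_singleton_iff]
        push_neg
        exact ⟨hab, hac⟩), Set.ncard_pair hbc]
    rintro S ⟨v, hv, rfl | rfl⟩
    · exact hTcard v hv
    · rw [← Set.image_neg_eq_neg, Set.ncard_image_of_injective _ neg_injective]
      exact hTcard v hv
  -- pairwise disjointness
  have hdisj : {S | ∃ v, (∃ m < t, f u v = g ^ m * c) ∧
        (S = Ttriple (g ^ (2 * t)) u v ∨ S = -Ttriple (g ^ (2 * t)) u v)}.PairwiseDisjoint id := by
    rintro S ⟨v, ⟨m, hm, hfv⟩, hSo⟩ S' ⟨v', ⟨m', hm', hfv'⟩, hSo'⟩ hne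
    rw [Function.onFun, Set.disjoint_left]
    intro x hx hx'
    apply hne
    rcases hSo with rfl | rfl <;> rcases hSo' with rfl | rfl
    · obtain ⟨i, hi, he⟩ := (hmemT v x).mp hx
      obtain ⟨i', hi', he'⟩ := (hmemT v' x).mp hx'
      obtain ⟨h1, h2⟩ := huniq v v' m m' i i' hm hm' (by omega) (by omega) hfv hfv'
        (he.symm.trans he')
      rw [h2]
    · obtain ⟨i, hi, he⟩ := (hmemT v x).mp hx
      obtain ⟨i', hi', he'⟩ := (hmemN v' x).mp hx'
      obtain ⟨h1, h2⟩ := huniq v v' m m' i i' hm hm' (by omega) (by omega) hfv hfv'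
        (he.symm.trans he')
      omega
    · obtain ⟨i, hi, he⟩ := (hmemN v x).mp hx
      obtain ⟨i', hi', he'⟩ := (hmemT v' x).mp hx'
      obtain ⟨h1, h2⟩ := huniq v v' m m' i i' hm hm' (by omega) (by omega) hfv hfv'
        (he.symm.trans he')
      omega
    · obtain ⟨i, hi, he⟩ := (hmemN v x).mp hx
      obtain ⟨i', hi', he'⟩ := (hmemN v' x).mp hx'
      obtain ⟨h1, h2⟩ := huniq v v' m m' i i' hm hm' (by omega) (by omega) hfv hfv'
        (he.symm.trans he')
      rw [h2]
  -- the count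
  have hcount : {S | ∃ v, (∃ m < t, f u v = g ^ m * c) ∧
        (S = Ttriple (g ^ (2 * t)) u v ∨ S = -Ttriple (g ^ (2 * t)) u v)}.ncard =
      Fintype.card F * (Fintype.card F - 1) / 3 := by
    obtain ⟨w, hw⟩ : ∃ w, f u w = 1 := by
      have hr := Module.Dual.range_eq_top_of_ne_zero hfu0
      have h1 : (1:F) ∈ LinearMap.range (f u) := by rw [hr]; trivial
      exact h1
    set V : Set L := {v | ∃ m, m < t ∧ f u v = g ^ m * c} with hVdef
    set φ : F × Fin t → L := fun p => p.1 • u + (g ^ (p.2 : ℕ) * c) • w with hφdef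
    have hφf : ∀ p, f u (φ p) = g ^ (p.2 : ℕ) * c := by
      intro p
      simp [hφdef, map_add, map_smul, halt u, hw]
    have hφinj : Function.Injective φ := by
      intro p p' h
      have h2 := congrArg (f u) h
      rw [hφf, hφf] at h2
      have h3 : ((p.2 : ℕ) : ℕ) = ((p'.2 : ℕ) : ℕ) := by
        refine (hpow_lt _ _ ?_ ?_).mp (mul_right_cancel₀ hc h2)
        · have := p.2.2; omega
        · have := p'.2.2; omega
      have hC : (g ^ (p.2 : ℕ) * c) • w = (g ^ (p'.2 : ℕ) * c) • w := by rw [h3]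
      rw [hφdef] at h
      simp only at h
      rw [hC] at h
      have h4 := add_right_cancel h
      have h5 : (p.1 - p'.1) • u = 0 := by rw [sub_smul, h4, sub_self]
      rcases smul_eq_zero.mp h5 with h6 | h6
      · exact Prod.ext (sub_eq_zero.mp h6) (Fin.ext h3)
      · exact absurd h6 hu
    have hVr : V = Set.range φ := by
      ext v
      constructor
      · rintro ⟨m, hm, hfv⟩
        have h0 : f u (v - (g ^ m * c) • w) = 0 := by
          rw [map_sub, map_smul, hw, smul_eq_mul, mul_one, hfv, sub_self]
        obtain ⟨a, ha⟩ := Submodule.mem_span_singleton.mp ((hker _).mp h0)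
        refine ⟨(a, ⟨m, hm⟩), ?_⟩
        simp only [hφdef]
        rw [ha]
        abel
      · rintro ⟨p, rfl⟩
        exact ⟨p.2, p.2.2, hφf p⟩
    have hVcard : V.ncard = (6*t+1) * t := by
      rw [hVr, ← Nat.card_coe_set_eq, Nat.card_range_of_injective hφinj,
        Nat.card_prod, Nat.card_eq_fintype_card, hq, Nat.card_eq_fintype_card,
        Fintype.card_fin]
    have h𝒯eq : {S | ∃ v, (∃ m < t, f u v = g ^ m * c) ∧
          (S = Ttriple (g ^ (2 * t)) u v ∨ S = -Ttriple (g ^ (2 * t)) u v)} =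
        (fun v => Ttriple (g ^ (2*t)) u v) '' V ∪ (fun v => -Ttriple (g ^ (2*t)) u v) '' V := by
      ext S
      simp only [Set.mem_setOf_eq, Set.mem_union, Set.mem_image]
      constructor
      · rintro ⟨v, hv, h | h⟩
        · exact Or.inl ⟨v, hv, h.symm⟩
        · exact Or.inr ⟨v, hv, h.symm⟩
      · rintro (⟨v, hv, h⟩ | ⟨v, hv, h⟩) <;> exact ⟨v, hv, by tauto⟩
    have hTinj : Set.InjOn (fun v => Ttriple (g ^ (2*t)) u v) V := by
      rintro v ⟨m, hm, hfv⟩ v' ⟨m', hm', hfv'⟩ h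
      simp only at h
      have hm0 : u + v ∈ Ttriple (g ^ (2*t)) u v' := by
        rw [← h]
        exact (hmemT v _).mpr ⟨0, by tauto, e0 v⟩
      obtain ⟨i, hi, he⟩ := (hmemT v' _).mp hm0
      exact (huniq v v' m m' 0 i hm hm' (by omega) (by omega) hfv hfv'
        (by rw [← e0, he])).2
    have hNinj : Set.InjOn (fun v => -Ttriple (g ^ (2*t)) u v) V := by
      rintro v ⟨m, hm, hfv⟩ v' ⟨m', hm', hfv'⟩ h
      simp only at h
      have hm0 : η ^ 3 • u + η ^ (6 - 3) • v ∈ -Ttriple (g ^ (2*t)) u v' := by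
        rw [← h]; exact e3mem v
      obtain ⟨i, hi, he⟩ := (hmemN v' _).mp hm0
      exact (huniq v v' m m' 3 i hm hm' (by omega) (by omega) hfv hfv' he).2
    have hImdisj : Disjoint ((fun v => Ttriple (g ^ (2*t)) u v) '' V)
        ((fun v => -Ttriple (g ^ (2*t)) u v) '' V) := by
      rw [Set.disjoint_left]
      rintro S ⟨v, ⟨m, hm, hfv⟩, rfl⟩ ⟨v', ⟨m', hm', hfv'⟩, hS'⟩
      simp only at hS'
      have hm0 : u + v ∈ -Ttriple (g ^ (2*t)) u v' := by
        rw [hS']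
        exact (hmemT v _).mpr ⟨0, by tauto, e0 v⟩
      obtain ⟨i, hi, he⟩ := (hmemN v' _).mp hm0
      have := (huniq v v' m m' 0 i hm hm' (by omega) (by omega) hfv hfv'
        (by rw [← e0, he])).1
      omega
    rw [h𝒯eq, Set.ncard_union_eq hImdisj (Set.toFinite _) (Set.toFinite _),
      Set.ncard_image_of_injOn hTinj, Set.ncard_image_of_injOn hNinj, hVcard, hq]
    have h36 : (6*t+1) * (6*t+1-1) = ((6*t+1) * t + (6*t+1) * t) * 3 := by
      rw [Nat.add_sub_cancel]; ring
    rw [h36, Nat.mul_div_cancel _ (by norm_num)]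
  exact ⟨hcount, hsize, hdisj, hunion⟩
end

section
/- Let q = 6t+1 be a prime power and W = F_q^n with n ≥ 2. Fix: a primitive root g of F_q with ω = g^{2t}; for each 2-dimensional subspace L of W a nondegenerate alternating bilinear form f_L on L; and for each 1-dimensional subspace K of W a chosen generator. For a nonzero u ∈ W and c ∈ F_q^*, define P_{u,c} as the set of triples ±T(u,v) over all 2-dimensional subspaces L containing span(u) and all v ∈ L with f_L(u,v) ∈ {g^m c : 0 ≤ m < t}. Then P_{u,c} is a partition of W ∖ span(u) into 3-element sets. -/
/-- The partial parallel class `P_{u,c}`: all triples `±T(u,v)` over 2-dimensional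
subspaces `L ∋ u` and `v ∈ L` with `f_L(u,v) ∈ {gᵐc : 0 ≤ m < t}`. -/
def Pclass {F : Type*} [Field F] {W : Type*} [AddCommGroup W] [Module F W]
    (t : ℕ) (g : F) (f : (L : Submodule F W) → L →ₗ[F] L →ₗ[F] F)
    (u : W) (c : F) : Set (Set W) :=
  {S | ∃ (L : Submodule F W) (huL : u ∈ L), Module.finrank F L = 2 ∧
    ∃ v : L, (∃ m < t, f L ⟨u, huL⟩ v = g ^ m * c) ∧
      (S = Ttriple (g ^ (2 * t)) u (v : W) ∨
       S = -Ttriple (g ^ (2 * t)) u (v : W))}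

section aux
variable {F W : Type*} [Field F] [AddCommGroup W] [Module F W]

lemma mem_Ttriple_iff {ω : F} (hω3 : ω ^ 3 = 1) (u v w : W) :
    w ∈ Ttriple ω u v ↔ (v = w - u ∨ v = ω • w - ω ^ 2 • u ∨ v = ω ^ 2 • w - ω • u) := by
  simp only [Ttriple, Set.mem_insert_iff, Set.mem_singleton_iff]
  constructor
  · rintro (h | h | h)
    · exact Or.inl (by rw [h]; abel)
    · refine Or.inr (Or.inl ?_)
      rw [h]
      match_scalars <;> first | ring1 | linear_combination hω3 | linear_combination -hω3 |
        linear_combination ω * hω3 | linear_combination -ω * hω3 |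
        linear_combination ω^2 * hω3 | linear_combination -ω^2 * hω3
    · refine Or.inr (Or.inr ?_)
      rw [h]
      match_scalars <;> first | ring1 | linear_combination hω3 | linear_combination -hω3 |
        linear_combination ω * hω3 | linear_combination -ω * hω3 |
        linear_combination ω^2 * hω3 | linear_combination -ω^2 * hω3
  · rintro (h | h | h)
    · exact Or.inl (by rw [h]; abel)
    · refine Or.inr (Or.inl ?_)
      rw [h]
      match_scalars <;> first | ring1 | linear_combination hω3 | linear_combination -hω3 |
        linear_combination ω * hω3 | linear_combination -ω * hω3 |
        linear_combination ω^2 * hω3 | linear_combination -ω^2 * hω3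
    · refine Or.inr (Or.inr ?_)
      rw [h]
      match_scalars <;> first | ring1 | linear_combination hω3 | linear_combination -hω3 |
        linear_combination ω * hω3 | linear_combination -ω * hω3 |
        linear_combination ω^2 * hω3 | linear_combination -ω^2 * hω3

lemma neg_Ttriple (ω : F) (u v : W) : -Ttriple ω u v = Ttriple ω (-u) (-v) := by
  ext x
  simp only [Ttriple, Set.mem_neg, Set.mem_insert_iff, Set.mem_singleton_iff]
  constructor
  · rintro (h | h | h)
    · exact Or.inl (by linear_combination (norm := module) -h)
    · exact Or.inr (Or.inl (by linear_combination (norm := module) -h))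
    · exact Or.inr (Or.inr (by linear_combination (norm := module) -h))
  · rintro (h | h | h)
    · exact Or.inl (by linear_combination (norm := module) -h)
    · exact Or.inr (Or.inl (by linear_combination (norm := module) -h))
    · exact Or.inr (Or.inr (by linear_combination (norm := module) -h))

lemma Ttriple_ncard {ω : F} (hω3 : ω ^ 3 = 1) (hω1 : ω ≠ 1) {u v : W}
    (h : LinearIndependent F ![u, v]) : (Ttriple ω u v).ncard = 3 := by
  have hp := LinearIndependent.pair_iff.mp h
  have hsq : ω ^ 2 ≠ 1 := by
    intro h2
    exact hω1 (by linear_combination hω3 - ω * h2)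
  have h1 : u + v ≠ ω • u + ω ^ 2 • v := by
    intro he
    have := (hp (1 - ω) (1 - ω ^ 2) (by linear_combination (norm := module) he)).1
    exact hω1 (sub_eq_zero.mp this).symm
  have h2 : u + v ≠ ω ^ 2 • u + ω • v := by
    intro he
    have := (hp (1 - ω ^ 2) (1 - ω) (by linear_combination (norm := module) he)).1
    exact hsq (sub_eq_zero.mp this).symm
  have h3 : ω • u + ω ^ 2 • v ≠ ω ^ 2 • u + ω • v := by
    intro he
    have := (hp (ω - ω ^ 2) (ω ^ 2 - ω) (by linear_combination (norm := module) he)).1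
    have heq : ω = ω ^ 2 := sub_eq_zero.mp this
    exact hsq (by linear_combination hω3 + ω * heq)
  show ({u + v, ω • u + ω ^ 2 • v, ω ^ 2 • u + ω • v} : Set W).ncard = 3
  rw [Set.ncard_insert_of_notMem (by simp [h1, h2]) ((Set.finite_singleton _).insert _),
    Set.ncard_insert_of_notMem (by simp [h3]) (Set.finite_singleton _),
    Set.ncard_singleton]

end aux


/-- `P_{u,c}` is a partition of `W ∖ span(u)` into 3-element sets. -/
theorem Pclass_partition (F : Type*) [Field F] [Fintype F]
    (t : ℕ) (hq : Fintype.card F = 6 * t + 1)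
    (g : F) (hg : ∀ x : F, x ≠ 0 → ∃ k : ℕ, g ^ k = x)
    (n : ℕ) (hn : 2 ≤ n)
    (f : (L : Submodule F (Fin n → F)) → L →ₗ[F] L →ₗ[F] F)
    (halt : ∀ L : Submodule F (Fin n → F), Module.finrank F L = 2 → ∀ x, f L x x = 0)
    (hnd : ∀ L : Submodule F (Fin n → F), Module.finrank F L = 2 → ∀ x, (∀ y, f L x y = 0) → x = 0)
    (u : Fin n → F) (hu : u ≠ 0) (c : F) (hc : c ≠ 0) :
    (∀ S ∈ Pclass t g f u c, S.ncard = 3) ∧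
    (Pclass t g f u c).PairwiseDisjoint id ∧
    ⋃₀ Pclass t g f u c = {x : Fin n → F | x ∉ Submodule.span F {u}} := by
  classical
  have ht : 0 < t := by
    have := Fintype.one_lt_card (α := F)
    omega
  have hg0 : g ≠ 0 := by
    intro hg0
    have hne : ({0, 1} : Finset F) ≠ Finset.univ := by
      intro h
      have h1 := congrArg Finset.card h
      have h2 : ({0, 1} : Finset F).card ≤ 2 :=
        (Finset.card_insert_le _ _).trans (by simp)
      rw [Finset.card_univ, hq] at h1
      omega
    have hne2 : ¬ ∀ x : F, x ∈ ({0, 1} : Finset F) :=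
      fun h => hne (Finset.eq_univ_iff_forall.mpr h)
    push_neg at hne2
    obtain ⟨x, hx⟩ := hne2
    simp only [Finset.mem_insert, Finset.mem_singleton, not_or] at hx
    obtain ⟨k, hk⟩ := hg x hx.1
    rcases Nat.eq_zero_or_pos k with rfl | hk0
    · rw [pow_zero] at hk; exact hx.2 hk.symm
    · rw [hg0, zero_pow (by omega)] at hk; exact hx.1 hk.symm
  set gu : Fˣ := Units.mk0 g hg0 with hgu
  have hall : ∀ x : Fˣ, x ∈ Subgroup.zpowers gu := by
    intro x
    obtain ⟨k, hk⟩ := hg x.val (Units.ne_zero x)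
    exact ⟨(k : ℤ), by ext; push_cast; simpa [hgu] using hk⟩
  have horder : orderOf gu = 6 * t := by
    have h := orderOf_eq_card_of_forall_mem_zpowers hall
    rw [Nat.card_eq_fintype_card, Fintype.card_units, hq] at h
    omega
  have hpow : ∀ a b : ℕ, g ^ a = g ^ b ↔ a % (6 * t) = b % (6 * t) := by
    intro a b
    have huv : g ^ a = g ^ b ↔ gu ^ a = gu ^ b := by
      constructor
      · intro h; ext; simpa [hgu] using h
      · intro h; simpa [hgu] using congrArg Units.val h
    rw [huv, pow_eq_pow_iff_modEq, horder]
    rfl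
  have h6t : g ^ (6 * t) = 1 := by
    have : g ^ (6 * t) = g ^ 0 := (hpow _ _).mpr (by simp)
    simpa using this
  have hper : ∀ a : ℕ, g ^ (a + 6 * t) = g ^ a := by
    intro a; rw [pow_add, h6t, mul_one]
  have hneg : g ^ (3 * t) = -1 := by
    have hsq : (g ^ (3 * t)) ^ 2 = 1 := by
      rw [← pow_mul, show 3 * t * 2 = 6 * t by ring, h6t]
    have h01 : (g ^ (3 * t) - 1) * (g ^ (3 * t) + 1) = 0 := by linear_combination hsq
    rcases mul_eq_zero.mp h01 with h | h
    · exfalso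
      have : g ^ (3 * t) = g ^ 0 := by rw [pow_zero]; exact sub_eq_zero.mp h
      have h2 := (hpow _ _).mp this
      rw [Nat.mod_eq_of_lt (by omega), Nat.zero_mod] at h2
      omega
    · exact eq_neg_of_add_eq_zero_left h
  set ω := g ^ (2 * t) with hωdef
  have hω3 : ω ^ 3 = 1 := by
    rw [hωdef, ← pow_mul, show 2 * t * 3 = 6 * t by ring, h6t]
  have hω1 : ω ≠ 1 := by
    intro h
    have : g ^ (2 * t) = g ^ 0 := by rw [pow_zero, ← hωdef, h]
    have h2 := (hpow _ _).mp this
    rw [Nat.mod_eq_of_lt (by omega), Nat.zero_mod] at h2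
    omega
  have hω4 : (ω ^ 2) ^ 2 = ω := by linear_combination ω * hω3
  have e0 : g ^ (t * 0) = 1 := by simp
  have e2 : g ^ (t * 2) = ω := by rw [hωdef, show t * 2 = 2 * t by ring]
  have e4 : g ^ (t * 4) = ω ^ 2 := by rw [hωdef, show t * 4 = 2 * t * 2 by ring, pow_mul]
  have e3 : g ^ (t * 3) = -1 := by rw [show t * 3 = 3 * t by ring, hneg]
  have e1 : g ^ (t * 1) = -ω ^ 2 := by
    rw [← hper, show t * 1 + 6 * t = 3 * t + 2 * t * 2 by ring, pow_add, hneg, pow_mul,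
      ← hωdef, neg_one_mul]
  have e5 : g ^ (t * 5) = -ω := by
    rw [show t * 5 = 3 * t + 2 * t by ring, pow_add, hneg, ← hωdef, neg_one_mul]
  -- arithmetic lemmas
  have harith : ∀ s₁ s₂ m₁ m₂ : ℕ, ∀ d : F, s₁ < 6 → s₂ < 6 → m₁ < t → m₂ < t → d ≠ 0 →
      g ^ (t * s₁) * d = g ^ m₁ * c → g ^ (t * s₂) * d = g ^ m₂ * c → s₁ = s₂ ∧ m₁ = m₂ := by
    intro s₁ s₂ m₁ m₂ d hs₁ hs₂ hm₁ hm₂ hd h1 h2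
    have hgg : g ^ (t * s₁ + m₂) = g ^ (t * s₂ + m₁) := by
      apply mul_right_cancel₀ hd
      rw [pow_add, pow_add]
      linear_combination g ^ m₂ * h1 - g ^ m₁ * h2
    have hmod := (hpow _ _).mp hgg
    have hb₁ : t * s₁ + m₂ < 6 * t := by
      have := mul_le_mul_right (show s₁ ≤ 5 by omega) t
      omega
    have hb₂ : t * s₂ + m₁ < 6 * t := by
      have := mul_le_mul_right (show s₂ ≤ 5 by omega) t
      omega
    rw [Nat.mod_eq_of_lt hb₁, Nat.mod_eq_of_lt hb₂] at hmod
    constructor <;> (interval_cases s₁ <;> interval_cases s₂ <;> omega)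
  have hexist : ∀ d : F, d ≠ 0 → ∃ s, s < 6 ∧ ∃ m, m < t ∧ g ^ (t * s) * d = g ^ m * c := by
    intro d hd
    obtain ⟨k, hk⟩ := hg (d * c⁻¹) (mul_ne_zero hd (inv_ne_zero hc))
    have hd' : d = g ^ (k % (6 * t)) * c := by
      have : g ^ (k % (6 * t)) = g ^ k := (hpow _ _).mpr (Nat.mod_mod_of_dvd k dvd_rfl)
      rw [this, hk]
      field_simp
    set k' := k % (6 * t) with hk'def
    have hk'lt : k' < 6 * t := Nat.mod_lt _ (by omega)
    obtain ⟨q, r, hq6, hrt, hqr⟩ : ∃ q r, q < 6 ∧ r < t ∧ k' = t * q + r :=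
      ⟨k' / t, k' % t, Nat.div_lt_of_lt_mul (by omega), Nat.mod_lt _ (by omega),
        (Nat.div_add_mod k' t).symm⟩
    refine ⟨(6 - q) % 6, Nat.mod_lt _ (by omega), r, hrt, ?_⟩
    rw [hd', ← mul_assoc, ← pow_add]
    congr 1
    apply (hpow _ _).mpr
    have hcase : (6 - q) % 6 + q = 0 ∨ (6 - q) % 6 + q = 6 := by omega
    rcases hcase with h | h
    · have hs0 : (6 - q) % 6 = 0 := by omega
      have hq0 : q = 0 := by omega
      have he : t * ((6 - q) % 6) + k' = r := by rw [hqr, hs0, hq0]; simp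
      rw [he]
    · have he : t * ((6 - q) % 6) + k' = 6 * t + r := by
        rw [hqr, show t * ((6 - q) % 6) + (t * q + r) = t * ((6 - q) % 6 + q) + r from by ring,
          h]
        ring
      rw [he, Nat.add_mod_left]
  -- candidate conversions
  have hc0 : ∀ w : Fin n → F, g ^ (t * 0) • w - (g ^ (t * 0)) ^ 2 • u = w - u := by
    intro w; rw [e0]; module
  have hc2 : ∀ w : Fin n → F, g ^ (t * 2) • w - (g ^ (t * 2)) ^ 2 • u = ω • w - ω ^ 2 • u := by
    intro w; rw [e2]
  have hc4 : ∀ w : Fin n → F,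
      g ^ (t * 4) • w - (g ^ (t * 4)) ^ 2 • u = ω ^ 2 • w - ω • u := by
    intro w; rw [e4, hω4]
  have hc3 : ∀ w : Fin n → F, g ^ (t * 3) • w - (g ^ (t * 3)) ^ 2 • u = -w - u := by
    intro w; rw [e3]; module
  have hc5 : ∀ w : Fin n → F,
      g ^ (t * 5) • w - (g ^ (t * 5)) ^ 2 • u = ω • -w - ω ^ 2 • u := by
    intro w; rw [e5]; module
  have hc1 : ∀ w : Fin n → F,
      g ^ (t * 1) • w - (g ^ (t * 1)) ^ 2 • u = ω ^ 2 • -w - ω • u := by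
    intro w; rw [e1]
    match_scalars <;> first | ring1 | linear_combination ω * hω3 | linear_combination -ω * hω3
  have hgetS : ∀ (v w : Fin n → F) (S : Set (Fin n → F)),
      (S = Ttriple ω u v ∨ S = -Ttriple ω u v) → w ∈ S →
      ∃ s, s < 6 ∧ v = g ^ (t * s) • w - (g ^ (t * s)) ^ 2 • u ∧
        (s % 2 = 0 → S = Ttriple ω u v) ∧ (s % 2 = 1 → S = -Ttriple ω u v) := by
    intro v w S hS hw
    rcases hS with rfl | rfl
    · rcases (mem_Ttriple_iff hω3 u v w).mp hw with h | h | h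
      · exact ⟨0, by norm_num, by rw [hc0]; exact h, fun _ => rfl,
          fun h2 => absurd h2 (by norm_num)⟩
      · exact ⟨2, by norm_num, by rw [hc2]; exact h, fun _ => rfl,
          fun h2 => absurd h2 (by norm_num)⟩
      · exact ⟨4, by norm_num, by rw [hc4]; exact h, fun _ => rfl,
          fun h2 => absurd h2 (by norm_num)⟩
    · rw [Set.mem_neg] at hw
      rcases (mem_Ttriple_iff hω3 u v (-w)).mp hw with h | h | h
      · exact ⟨3, by norm_num, by rw [hc3]; exact h, fun h2 => absurd h2 (by norm_num),
          fun _ => rfl⟩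
      · exact ⟨5, by norm_num, by rw [hc5]; exact h, fun h2 => absurd h2 (by norm_num),
          fun _ => rfl⟩
      · exact ⟨1, by norm_num, by rw [hc1]; exact h, fun h2 => absurd h2 (by norm_num),
          fun _ => rfl⟩
  have hputT : ∀ (w : Fin n → F) (s : ℕ), s < 6 → s % 2 = 0 →
      w ∈ Ttriple ω u (g ^ (t * s) • w - (g ^ (t * s)) ^ 2 • u) := by
    intro w s hs hpar
    interval_cases s
    · exact (mem_Ttriple_iff hω3 u _ w).mpr (Or.inl (hc0 w))
    · simp at hpar
    · exact (mem_Ttriple_iff hω3 u _ w).mpr (Or.inr (Or.inl (hc2 w)))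
    · simp at hpar
    · exact (mem_Ttriple_iff hω3 u _ w).mpr (Or.inr (Or.inr (hc4 w)))
    · simp at hpar
  have hputN : ∀ (w : Fin n → F) (s : ℕ), s < 6 → s % 2 = 1 →
      w ∈ -Ttriple ω u (g ^ (t * s) • w - (g ^ (t * s)) ^ 2 • u) := by
    intro w s hs hpar
    rw [Set.mem_neg]
    interval_cases s
    · simp at hpar
    · exact (mem_Ttriple_iff hω3 u _ (-w)).mpr (Or.inr (Or.inr (hc1 w)))
    · simp at hpar
    · exact (mem_Ttriple_iff hω3 u _ (-w)).mpr (Or.inl (hc3 w))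
    · simp at hpar
    · exact (mem_Ttriple_iff hω3 u _ (-w)).mpr (Or.inr (Or.inl (hc5 w)))
  have hfval : ∀ (L : Submodule F (Fin n → F)) (huL : u ∈ L), Module.finrank F L = 2 →
      ∀ (w : Fin n → F) (hwL : w ∈ L) (s : ℕ) (vv : L),
      (vv : Fin n → F) = g ^ (t * s) • w - (g ^ (t * s)) ^ 2 • u →
      f L ⟨u, huL⟩ vv = g ^ (t * s) * f L ⟨u, huL⟩ ⟨w, hwL⟩ := by
    intro L huL hL2 w hwL s vv hvv
    have hvv' : vv = g ^ (t * s) • (⟨w, hwL⟩ : L) - (g ^ (t * s)) ^ 2 • (⟨u, huL⟩ : L) := by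
      apply Subtype.ext
      simpa using hvv
    rw [hvv', map_sub, map_smul, map_smul, halt L hL2, smul_eq_mul, smul_eq_mul, mul_zero,
      sub_zero]
  have hvns : ∀ (L : Submodule F (Fin n → F)) (huL : u ∈ L), Module.finrank F L = 2 →
      ∀ (vv : L) (m : ℕ), f L ⟨u, huL⟩ vv = g ^ m * c →
      (vv : Fin n → F) ∉ Submodule.span F {u} := by
    intro L huL hL2 vv m hfv hmem
    obtain ⟨a, ha⟩ := Submodule.mem_span_singleton.mp hmem
    have hvv' : vv = a • (⟨u, huL⟩ : L) := Subtype.ext (by simpa using ha.symm)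
    rw [hvv', map_smul, halt L hL2, smul_zero] at hfv
    exact (mul_ne_zero (pow_ne_zero _ hg0) hc) hfv.symm
  have hnotin : ∀ S ∈ Pclass t g f u c, ∀ w ∈ S, w ∉ Submodule.span F {u} := by
    intro S hS w hwS hwspan
    obtain ⟨L, huL, hL2, vv, ⟨m, hmt, hfv⟩, hSor⟩ := hS
    obtain ⟨s, hs6, hvc, -, -⟩ := hgetS (vv : Fin n → F) w S hSor hwS
    apply hvns L huL hL2 vv m hfv
    rw [hvc]
    exact Submodule.sub_mem _ (Submodule.smul_mem _ _ hwspan)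
      (Submodule.smul_mem _ _ (Submodule.mem_span_singleton_self u))
  have hindep : ∀ w : Fin n → F, w ∉ Submodule.span F {u} → LinearIndependent F ![u, w] := by
    intro w hw
    rw [LinearIndependent.pair_iff' hu]
    intro a ha
    exact hw (ha ▸ Submodule.smul_mem _ a (Submodule.mem_span_singleton_self u))
  have hspan2 : ∀ w : Fin n → F, w ∉ Submodule.span F {u} →
      Module.finrank F (Submodule.span F {u, w} : Submodule F (Fin n → F)) = 2 := by
    intro w hw
    have h := finrank_span_eq_card (hindep w hw)
    have hr : Set.range ![u, w] = {u, w} := by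
      ext y
      simp [Matrix.range_cons, Matrix.range_empty, or_comm]
    rw [hr] at h
    simpa using h
  have hLeq : ∀ (L : Submodule F (Fin n → F)), Module.finrank F L = 2 → u ∈ L →
      ∀ w : Fin n → F, w ∉ Submodule.span F {u} → w ∈ L →
      Submodule.span F {u, w} = L := by
    intro L hL2 huL w hw hwL
    apply Submodule.eq_of_le_of_finrank_le
    · rw [Submodule.span_le]
      intro x hx
      simp only [Set.mem_insert_iff, Set.mem_singleton_iff] at hx
      rcases hx with rfl | rfl <;> assumption
    · rw [hL2, hspan2 w hw]
  have hkey : ∀ S₁ ∈ Pclass t g f u c, ∀ S₂ ∈ Pclass t g f u c, ∀ w : Fin n → F,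
      w ∈ S₁ → w ∈ S₂ → S₁ = S₂ := by
    intro S₁ hS₁ S₂ hS₂ w hw₁ hw₂
    have hwspan := hnotin S₁ hS₁ w hw₁
    obtain ⟨L₁, huL₁, hL₁2, v₁, ⟨m₁, hm₁, hf₁⟩, hOr₁⟩ := hS₁
    obtain ⟨L₂, huL₂, hL₂2, v₂, ⟨m₂, hm₂, hf₂⟩, hOr₂⟩ := hS₂
    obtain ⟨s₁, hs₁, hv₁, hT₁, hN₁⟩ := hgetS _ w S₁ hOr₁ hw₁
    obtain ⟨s₂, hs₂, hv₂, hT₂, hN₂⟩ := hgetS _ w S₂ hOr₂ hw₂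
    have hwL : ∀ (L : Submodule F (Fin n → F)), u ∈ L → ∀ (vv : L) (s : ℕ),
        (vv : Fin n → F) = g ^ (t * s) • w - (g ^ (t * s)) ^ 2 • u → w ∈ L := by
      intro L hL vv s hv
      have ha : (g ^ (t * s)) ≠ 0 := pow_ne_zero _ hg0
      have hw' : w = (g ^ (t * s))⁻¹ • ((vv : Fin n → F) + (g ^ (t * s)) ^ 2 • u) := by
        rw [hv, sub_add_cancel, smul_smul, inv_mul_cancel₀ ha, one_smul]
      rw [hw']
      exact Submodule.smul_mem _ _ (Submodule.add_mem _ vv.2 (Submodule.smul_mem _ _ hL))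
    have hwL₁ := hwL L₁ huL₁ v₁ s₁ hv₁
    have hwL₂ := hwL L₂ huL₂ v₂ s₂ hv₂
    have hLL : L₁ = L₂ := (hLeq L₁ hL₁2 huL₁ w hwspan hwL₁).symm.trans
      (hLeq L₂ hL₂2 huL₂ w hwspan hwL₂)
    subst hLL
    have hd₁ := hfval L₁ huL₁ hL₁2 w hwL₁ s₁ v₁ hv₁
    have hd₂ := hfval L₁ huL₁ hL₁2 w hwL₁ s₂ v₂ hv₂
    set d := f L₁ ⟨u, huL₁⟩ ⟨w, hwL₁⟩ with hdd
    have hg₁ : g ^ (t * s₁) * d = g ^ m₁ * c := by rw [← hd₁]; exact hf₁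
    have hg₂ : g ^ (t * s₂) * d = g ^ m₂ * c := by rw [← hd₂]; exact hf₂
    have hdne : d ≠ 0 := by
      intro h0
      rw [h0, mul_zero] at hg₁
      exact (mul_ne_zero (pow_ne_zero _ hg0) hc) hg₁.symm
    obtain ⟨hss, -⟩ := harith s₁ s₂ m₁ m₂ d hs₁ hs₂ hm₁ hm₂ hdne hg₁ hg₂
    have hvv : (v₁ : Fin n → F) = (v₂ : Fin n → F) := by rw [hv₁, hv₂, hss]
    rcases Nat.mod_two_eq_zero_or_one s₁ with hpar | hpar
    · rw [hT₁ hpar, hT₂ (by omega : s₂ % 2 = 0), hvv]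
    · rw [hN₁ hpar, hN₂ (by omega : s₂ % 2 = 1), hvv]
  refine ⟨?_, ?_, ?_⟩
  · intro S hS
    obtain ⟨L, huL, hL2, vv, ⟨m, hmt, hfv⟩, hOr⟩ := hS
    have hvsp := hvns L huL hL2 vv m hfv
    have hli : LinearIndependent F ![u, (vv : Fin n → F)] := hindep _ hvsp
    rcases hOr with rfl | rfl
    · exact Ttriple_ncard hω3 hω1 hli
    · rw [neg_Ttriple]
      apply Ttriple_ncard hω3 hω1
      rw [LinearIndependent.pair_iff]
      intro a b hab
      exact LinearIndependent.pair_iff.mp hli a b (by linear_combination (norm := module) -hab)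
  · intro S₁ h₁ S₂ h₂ hne
    exact Set.disjoint_left.mpr fun w hw₁ hw₂ => hne (hkey S₁ h₁ S₂ h₂ w hw₁ hw₂)
  · ext x
    simp only [Set.mem_sUnion, Set.mem_setOf_eq]
    constructor
    · rintro ⟨S, hS, hxS⟩
      exact hnotin S hS x hxS
    · intro hx
      have huL : u ∈ Submodule.span F {u, x} := Submodule.subset_span (by simp)
      have hxL : x ∈ Submodule.span F {u, x} := Submodule.subset_span (by simp)
      have hL2 : Module.finrank F (Submodule.span F {u, x} : Submodule F (Fin n → F)) = 2 :=
        hspan2 x hx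
      have hdne : f (Submodule.span F {u, x}) ⟨u, huL⟩ ⟨x, hxL⟩ ≠ 0 := by
        intro h0
        have hzero : ∀ y : Submodule.span F {u, x},
            f (Submodule.span F {u, x}) ⟨u, huL⟩ y = 0 := by
          intro y
          obtain ⟨a, b, hab⟩ := Submodule.mem_span_pair.mp y.2
          have hy : y = a • (⟨u, huL⟩ : Submodule.span F {u, x}) + b • ⟨x, hxL⟩ :=
            Subtype.ext (by simpa using hab.symm)
          rw [hy, map_add, map_smul, map_smul, halt _ hL2, h0, smul_zero, smul_zero, add_zero]
        have hu0 := hnd _ hL2 _ hzero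
        exact hu (by simpa using congrArg Subtype.val hu0)
      obtain ⟨s, hs6, m, hmt, heq⟩ := hexist _ hdne
      have hvL : g ^ (t * s) • x - (g ^ (t * s)) ^ 2 • u ∈ Submodule.span F {u, x} :=
        Submodule.sub_mem _ (Submodule.smul_mem _ _ hxL) (Submodule.smul_mem _ _ huL)
      have hfv : f (Submodule.span F {u, x}) ⟨u, huL⟩ ⟨_, hvL⟩ = g ^ m * c := by
        rw [hfval _ huL hL2 x hxL s ⟨_, hvL⟩ rfl]
        exact heq
      rcases Nat.mod_two_eq_zero_or_one s with hpar | hpar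
      · exact ⟨Ttriple ω u _, ⟨Submodule.span F {u, x}, huL, hL2, ⟨_, hvL⟩,
          ⟨m, hmt, hfv⟩, Or.inl rfl⟩, hputT x s hs6 hpar⟩
      · exact ⟨-Ttriple ω u _, ⟨Submodule.span F {u, x}, huL, hL2, ⟨_, hvL⟩,
          ⟨m, hmt, hfv⟩, Or.inr rfl⟩, hputN x s hs6 hpar⟩
end

section
/- Let q = 6t+1 be a prime power, g a primitive root of F_q, ω = g^{2t}, and W = F_q^n with n ≥ 2. Choose generators u_i of the (qⁿ−1)/(q−1) one-dimensional subspaces of W and nondegenerate alternating forms f_L on each 2-dimensional subspace L. For nonzero u and c ∈ F_q^*, let P_{u,c} be the partition of W ∖ span(u) into triples ±T(u,v) with f_L(u,v) ∈ g^{[0,t)}·c as defined in the paper. Then the union of the partial parallel classes P_{g^a u_i, ω^b} over 0 ≤ a < t, b ∈ {0,1,2}, and all i contains every unordered zero-sum non-collinear triple of W exactly once. -/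
set_option linter.unusedSectionVars false

section Aux
variable {F : Type*} [Field F] {W : Type*} [AddCommGroup W] [Module F W]

/-- canonical first component solving u+v = x, ωu+ω²v = y -/
noncomputable def U0 (ω : F) (x y : W) : W := (ω - ω^2)⁻¹ • (y - ω^2 • x)
noncomputable def V0 (ω : F) (x y : W) : W := (ω - ω^2)⁻¹ • (ω • x - y)

variable {ω : F}

lemma omega_ne_zero (hsum : ω^2 + ω + 1 = 0) : ω ≠ 0 := by
  rintro rfl; simp at hsum

lemma omega_cube (hsum : ω^2 + ω + 1 = 0) : ω^3 = 1 := by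
  linear_combination (ω - 1) * hsum

lemma omega_sub_ne (hsum : ω^2 + ω + 1 = 0) (hω1 : ω ≠ 1) : ω - ω^2 ≠ 0 := by
  intro h
  have : ω * (1 - ω) = 0 := by linear_combination h
  rcases mul_eq_zero.mp this with h' | h'
  · exact omega_ne_zero hsum h'
  · exact hω1 (by linear_combination -h')

lemma E1 (hsum : ω^2 + ω + 1 = 0) (hω1 : ω ≠ 1) (x y : W) : U0 ω x y + V0 ω x y = x := by
  have hδ := omega_sub_ne hsum hω1
  rw [U0, V0, ← smul_add]
  have h : (y - ω^2 • x) + (ω • x - y) = (ω - ω^2) • x := by module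
  rw [h, smul_smul, inv_mul_cancel₀ hδ, one_smul]

lemma E2 (hsum : ω^2 + ω + 1 = 0) (hω1 : ω ≠ 1) (x y : W) :
    ω • U0 ω x y + ω^2 • V0 ω x y = y := by
  have hδ := omega_sub_ne hsum hω1
  rw [U0, V0, smul_smul, smul_smul, mul_comm ω, mul_comm (ω^2), ← smul_smul, ← smul_smul,
    ← smul_add]
  have h : ω • (y - ω^2 • x) + ω^2 • (ω • x - y) = (ω - ω^2) • y := by
    match_scalars <;> ring
  rw [h, smul_smul, inv_mul_cancel₀ hδ, one_smul]

lemma E3 (hsum : ω^2 + ω + 1 = 0) (hω1 : ω ≠ 1) (x y : W) :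
    ω^2 • U0 ω x y + ω • V0 ω x y = -x - y := by
  have h : ω^2 • U0 ω x y + ω • V0 ω x y + (U0 ω x y + V0 ω x y)
      + (ω • U0 ω x y + ω^2 • V0 ω x y) = (ω^2 + ω + 1) • U0 ω x y
      + (ω^2 + ω + 1) • V0 ω x y := by module
  rw [hsum] at h
  simp only [zero_smul, add_zero, zero_add] at h
  linear_combination (norm := module) h - E1 hsum hω1 x y - E2 hsum hω1 x y

lemma U0neg (x y : W) : U0 ω (-x) (-y) = - U0 ω x y := by
  unfold U0; module

lemma V0neg (x y : W) : V0 ω (-x) (-y) = - V0 ω x y := by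
  unfold V0; module


lemma cube_roots (hsum : ω^2 + ω + 1 = 0) {ζ : F} (hζ : ζ^3 = 1) :
    ζ = 1 ∨ ζ = ω ∨ ζ = ω^2 := by
  have hω3 := omega_cube hsum
  have h : (ζ - 1) * ((ζ - ω) * (ζ - ω^2)) = 0 := by
    linear_combination hζ + (ζ - ζ^2) * hsum + (ζ - 1) * hω3
  rcases mul_eq_zero.mp h with h' | h'
  · exact Or.inl (by linear_combination h')
  · rcases mul_eq_zero.mp h' with h'' | h''
    · exact Or.inr (Or.inl (by linear_combination h''))
    · exact Or.inr (Or.inr (by linear_combination h''))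

lemma inv_omega (hsum : ω^2 + ω + 1 = 0) : ω⁻¹ = ω^2 :=
  inv_eq_of_mul_eq_one_right (by linear_combination omega_cube hsum)

lemma inv_omega_sq (hsum : ω^2 + ω + 1 = 0) : (ω^2)⁻¹ = ω :=
  inv_eq_of_mul_eq_one_right (by linear_combination omega_cube hsum)

lemma S1 (hsum : ω^2 + ω + 1 = 0) (u v : W) :
    ω • (ω • u) + ω^2 • (ω^2 • v) = ω^2 • u + ω • v := by
  have hω3 := omega_cube hsum
  match_scalars
  · ring
  · linear_combination ω * hω3

lemma S2 (hsum : ω^2 + ω + 1 = 0) (u v : W) :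
    ω • (ω^2 • u) + ω^2 • (ω • v) = u + v := by
  have hω3 := omega_cube hsum
  match_scalars <;> linear_combination hω3

lemma S2' (hsum : ω^2 + ω + 1 = 0) (u v : W) :
    ω^2 • (ω • u) + ω • (ω^2 • v) = u + v := by
  have hω3 := omega_cube hsum
  match_scalars <;> linear_combination hω3

lemma S3 (hsum : ω^2 + ω + 1 = 0) (u v : W) :
    ω^2 • (ω^2 • u) + ω • (ω • v) = ω • u + ω^2 • v := by
  have hω3 := omega_cube hsum
  match_scalars
  · linear_combination ω * hω3
  · ring

lemma perm3a (A B C : W) : ({B, C, A} : Set W) = {A, B, C} := by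
  ext w; simp only [Set.mem_insert_iff, Set.mem_singleton_iff]; tauto

lemma perm3b (A B C : W) : ({C, A, B} : Set W) = {A, B, C} := by
  ext w; simp only [Set.mem_insert_iff, Set.mem_singleton_iff]; tauto

lemma rotgen (hsum : ω^2 + ω + 1 = 0) {ζ : F} (hζ : ζ^3 = 1)
    {P Q A B C : W} (e1 : P + Q = A) (e2 : ω • P + ω^2 • Q = B)
    (e3 : ω^2 • P + ω • Q = C) :
    Ttriple ω (ζ • P) (ζ⁻¹ • Q) = {A, B, C} := by
  rcases cube_roots hsum hζ with rfl | rfl | rfl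
  · rw [Ttriple, inv_one, one_smul, one_smul, e1, e2, e3]
  · rw [Ttriple, inv_omega hsum, S1 hsum, S2' hsum, e1, e2, e3, perm3a]
  · rw [Ttriple, inv_omega_sq hsum, S2 hsum, S3 hsum, e1, e2, e3, perm3b]

lemma perm3c (A B C : W) : ({A, C, B} : Set W) = {A, B, C} := by
  ext w; simp only [Set.mem_insert_iff, Set.mem_singleton_iff]; tauto

lemma rotgen_neg (hsum : ω^2 + ω + 1 = 0) {ζ : F} (hζ : ζ^3 = -1)
    {P Q A B C : W} (e1 : P + Q = A) (e2 : ω • P + ω^2 • Q = B)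
    (e3 : ω^2 • P + ω • Q = C) :
    Ttriple ω (ζ • P) (ζ⁻¹ • Q) = {-A, -B, -C} := by
  have h3' : (-ζ)^3 = 1 := by
    rw [Odd.neg_pow ⟨1, by norm_num⟩, hζ, neg_neg]
  have e1' : (-P) + (-Q) = -A := by linear_combination (norm := module) -e1
  have e2' : ω • (-P) + ω^2 • (-Q) = -B := by linear_combination (norm := module) -e2
  have e3' : ω^2 • (-P) + ω • (-Q) = -C := by linear_combination (norm := module) -e3
  have hT := rotgen hsum h3' e1' e2' e3'
  rwa [inv_neg, neg_smul_neg, neg_smul_neg] at hT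

lemma inj_pair (hsum : ω^2 + ω + 1 = 0) (hω1 : ω ≠ 1) {u v u' v' : W}
    (h1 : u + v = u' + v') (h2 : ω • u + ω^2 • v = ω • u' + ω^2 • v') :
    u = u' ∧ v = v' := by
  have hδ := omega_sub_ne hsum hω1
  have hv : (ω - ω^2) • (v - v') = 0 := by
    linear_combination (norm := module) ω • h1 - h2
  have hv' : v = v' := by
    rcases smul_eq_zero.mp hv with h | h
    · exact absurd h hδ
    · exact sub_eq_zero.mp h
  refine ⟨?_, hv'⟩
  have := h1; rw [hv'] at this; exact add_right_cancel this

lemma coll {x y v : W} (hxy : LinearIndependent F ![x, y]) {c d : F}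
    (hx : x = c • v) (hy : y = d • v) : False := by
  rw [linearIndependent_fin2] at hxy
  obtain ⟨hy0, hax⟩ := hxy
  simp only [Matrix.cons_val_one, Matrix.head_cons, Matrix.cons_val_zero] at hy0 hax
  have hd : d ≠ 0 := by rintro rfl; simp at hy; exact hy0 hy
  exact hax (c * d⁻¹) (by rw [hy, hx, smul_smul, mul_assoc, inv_mul_cancel₀ hd, mul_one])

lemma negind {x y : W} (hxy : LinearIndependent F ![x, y]) :
    LinearIndependent F ![-x, -y] := by
  rw [linearIndependent_fin2] at hxy ⊢
  simp only [Matrix.cons_val_one, Matrix.head_cons, Matrix.cons_val_zero] at *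
  refine ⟨fun h => hxy.1 (by simpa using congrArg Neg.neg h), fun a h => ?_⟩
  exact hxy.2 a (by have := congrArg Neg.neg h; simpa using this)

lemma negset (x y w : W) : -({x, y, w} : Set W) = {-x, -y, -w} := by
  ext a
  simp [Set.mem_neg, Set.mem_insert_iff, Set.mem_singleton_iff, neg_eq_iff_eq_neg]


lemma degen (hsum : ω^2 + ω + 1 = 0) (hω1 : ω ≠ 1) {x y u v : W}
    (hxy : LinearIndependent F ![x, y])
    (hT : Ttriple ω u v = {x, y, -x - y}) (heq : u + v = ω • u + ω^2 • v) : False := by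
  have hω3 := omega_cube hsum
  have h3v : ω^3 • v = (1 : F) • v := by rw [hω3]
  have h0 : (1 - ω) • (u - ω^2 • v) = 0 := by
    linear_combination (norm := module) heq + h3v
  have hu : u = ω^2 • v := by
    rcases smul_eq_zero.mp h0 with h | h
    · exact absurd (by linear_combination -h) hω1
    · exact sub_eq_zero.mp h
  subst hu
  have hx : x ∈ Ttriple ω (ω^2 • v) v := by rw [hT]; exact Set.mem_insert _ _
  have hy : y ∈ Ttriple ω (ω^2 • v) v := by
    rw [hT]; exact Set.mem_insert_of_mem _ (Set.mem_insert _ _)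
  simp only [Ttriple, Set.mem_insert_iff, Set.mem_singleton_iff] at hx hy
  have hx' : ∃ c : F, x = c • v := by
    rcases hx with h | h | h
    · exact ⟨ω^2 + 1, by rw [h]; module⟩
    · exact ⟨ω^3 + ω^2, by rw [h]; module⟩
    · exact ⟨ω^2 * ω^2 + ω, by rw [h]; module⟩
  have hy' : ∃ c : F, y = c • v := by
    rcases hy with h | h | h
    · exact ⟨ω^2 + 1, by rw [h]; module⟩
    · exact ⟨ω^3 + ω^2, by rw [h]; module⟩
    · exact ⟨ω^2 * ω^2 + ω, by rw [h]; module⟩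
  obtain ⟨cx, hcx⟩ := hx'
  obtain ⟨cy, hcy⟩ := hy'
  exact coll hxy hcx hcy

lemma extract (hsum : ω^2 + ω + 1 = 0) (hω1 : ω ≠ 1) {x y u v : W}
    (hxy : LinearIndependent F ![x, y])
    (hT : Ttriple ω u v = {x, y, -x - y}) :
    ∃ c : F, c^3 = 1 ∧
      ((u = c • U0 ω x y ∧ v = c⁻¹ • V0 ω x y) ∨
       (u = c • V0 ω x y ∧ v = c⁻¹ • U0 ω x y)) := by
  have hω3 := omega_cube hsum
  have hc2 : (ω^2)^3 = 1 := by
    have h : (ω^2)^3 = (ω^3)^2 := by ring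
    rw [h, hω3, one_pow]
  have e1 := E1 hsum hω1 x y
  have e2 := E2 hsum hω1 x y
  have e3 := E3 hsum hω1 x y
  have h1 : u + v ∈ ({x, y, -x - y} : Set W) := by
    rw [← hT]; exact Set.mem_insert _ _
  have h2 : ω • u + ω^2 • v ∈ ({x, y, -x - y} : Set W) := by
    rw [← hT]; exact Set.mem_insert_of_mem _ (Set.mem_insert _ _)
  simp only [Set.mem_insert_iff, Set.mem_singleton_iff] at h1 h2
  have hiω : ω⁻¹ = ω^2 := inv_omega hsum
  have hiω2 : (ω^2)⁻¹ = ω := inv_omega_sq hsum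
  rcases h1 with h1 | h1 | h1 <;> rcases h2 with h2 | h2 | h2
  · exact absurd (h1.trans h2.symm) (fun h => degen hsum hω1 hxy hT h)
  · -- (x, y) : (U0, V0), c = 1
    obtain ⟨hu, hv⟩ := inj_pair hsum hω1 (h1.trans e1.symm) (h2.trans e2.symm)
    exact ⟨1, one_pow 3, Or.inl ⟨by rw [hu, one_smul], by rw [hv, inv_one, one_smul]⟩⟩
  · -- (x, z) : (V0, U0), c = 1
    have A : V0 ω x y + U0 ω x y = x := by rw [add_comm]; exact e1
    have B : ω • V0 ω x y + ω^2 • U0 ω x y = -x - y := by rw [add_comm]; exact e3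
    obtain ⟨hu, hv⟩ := inj_pair hsum hω1 (h1.trans A.symm) (h2.trans B.symm)
    exact ⟨1, one_pow 3, Or.inr ⟨by rw [hu, one_smul], by rw [hv, inv_one, one_smul]⟩⟩
  · -- (y, x) : (ω²V0, ωU0), c = ω²
    have A : ω^2 • V0 ω x y + ω • U0 ω x y = y := by rw [add_comm]; exact e2
    have B : ω • (ω^2 • V0 ω x y) + ω^2 • (ω • U0 ω x y) = x := by
      rw [S2 hsum, add_comm]; exact e1
    obtain ⟨hu, hv⟩ := inj_pair hsum hω1 (h1.trans A.symm) (h2.trans B.symm)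
    exact ⟨ω^2, hc2, Or.inr ⟨hu, by rw [hiω2]; exact hv⟩⟩
  · exact absurd (h1.trans h2.symm) (fun h => degen hsum hω1 hxy hT h)
  · -- (y, z) : (ωU0, ω²V0), c = ω
    have B : ω • (ω • U0 ω x y) + ω^2 • (ω^2 • V0 ω x y) = -x - y := by
      rw [S1 hsum]; exact e3
    obtain ⟨hu, hv⟩ := inj_pair hsum hω1 (h1.trans e2.symm) (h2.trans B.symm)
    exact ⟨ω, hω3, Or.inl ⟨hu, by rw [hiω]; exact hv⟩⟩
  · -- (z, x) : (ω²U0, ωV0), c = ω²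
    have B : ω • (ω^2 • U0 ω x y) + ω^2 • (ω • V0 ω x y) = x := by
      rw [S2 hsum]; exact e1
    obtain ⟨hu, hv⟩ := inj_pair hsum hω1 (h1.trans e3.symm) (h2.trans B.symm)
    exact ⟨ω^2, hc2, Or.inl ⟨hu, by rw [hiω2]; exact hv⟩⟩
  · -- (z, y) : (ωV0, ω²U0), c = ω
    have A : ω • V0 ω x y + ω^2 • U0 ω x y = -x - y := by rw [add_comm]; exact e3
    have B : ω • (ω • V0 ω x y) + ω^2 • (ω^2 • U0 ω x y) = y := by
      rw [S1 hsum, add_comm]; exact e2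
    obtain ⟨hu, hv⟩ := inj_pair hsum hω1 (h1.trans A.symm) (h2.trans B.symm)
    exact ⟨ω, hω3, Or.inr ⟨hu, by rw [hiω]; exact hv⟩⟩
  · exact absurd (h1.trans h2.symm) (fun h => degen hsum hω1 hxy hT h)


lemma bil_smul {B : W →ₗ[F] W →ₗ[F] F} {c : F} (hc : c ≠ 0) (p q : W) :
    B (c • p) (c⁻¹ • q) = B p q := by
  have h1 : B (c • p) = c • B p := map_smul B c p
  rw [h1, LinearMap.smul_apply, map_smul, smul_eq_mul, smul_eq_mul,
    ← mul_assoc, mul_inv_cancel₀ hc, one_mul]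

end Aux

section NT

lemma emod {t m : ℕ} (k : ℕ) (hm : m < t) : (m + k * t) % (6 * t) = m + k % 6 * t := by
  have hk : k % 6 + 6 * (k / 6) = k := Nat.mod_add_div k 6
  have h1 : k * t = k % 6 * t + 6 * t * (k / 6) := by
    conv_lhs => rw [← hk]
    ring
  rw [h1, ← add_assoc, Nat.add_mul_mod_self_left]
  have h2 : k % 6 ≤ 5 := by omega
  have h3 : k % 6 * t ≤ 5 * t := Nat.mul_le_mul_right t h2
  exact Nat.mod_eq_of_lt (by omega)

variable {F : Type*} [Field F]

lemma g_ne_zero [Fintype F] {t : ℕ} (hq : Fintype.card F = 6 * t + 1) {g : F}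
    (hg : ∀ x : F, x ≠ 0 → ∃ k : ℕ, g ^ k = x) : g ≠ 0 := by
  have ht : 1 ≤ t := by
    have h2 : 1 < Fintype.card F := Fintype.one_lt_card
    by_contra h
    interval_cases t <;> omega
  rintro rfl
  classical
  have hsub : (Finset.univ : Finset F) ⊆ {0, 1} := by
    intro x _
    by_cases hx : x = 0
    · simp [hx]
    · obtain ⟨k, hk⟩ := hg x hx
      cases k with
      | zero => simp at hk; simp [← hk]
      | succ k => rw [zero_pow (Nat.succ_ne_zero k)] at hk; exact absurd hk.symm hx
  have hcard : Fintype.card F ≤ 2 := by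
    calc Fintype.card F = Finset.univ.card := rfl
    _ ≤ ({0, 1} : Finset F).card := Finset.card_le_card hsub
    _ ≤ 2 := by apply le_trans (Finset.card_insert_le _ _); simp
  omega

lemma g_order [Fintype F] {t : ℕ} (hq : Fintype.card F = 6 * t + 1) {g : F}
    (hg : ∀ x : F, x ≠ 0 → ∃ k : ℕ, g ^ k = x) : orderOf g = 6 * t := by
  classical
  have hg0 : g ≠ 0 := g_ne_zero hq hg
  set gu : Fˣ := Units.mk0 g hg0 with hgu
  have hmem : ∀ u : Fˣ, u ∈ Subgroup.zpowers gu := by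
    intro u
    obtain ⟨k, hk⟩ := hg u.val u.ne_zero
    refine Subgroup.mem_zpowers_iff.mpr ⟨(k : ℤ), ?_⟩
    rw [zpow_natCast]
    exact Units.ext (by rw [Units.val_pow_eq_pow_val]; exact hk)
  have h1 : orderOf gu = 6 * t := by
    rw [orderOf_eq_card_of_forall_mem_zpowers hmem, Nat.card_eq_fintype_card,
      Fintype.card_units, hq]
    omega
  have h2 : (gu : F) = g := rfl
  rw [← h2, orderOf_units, h1]

lemma pow_inj_iff {g : F} (hg0 : g ≠ 0) {N : ℕ} (ho : orderOf g = N) (i j : ℕ) :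
    g ^ i = g ^ j ↔ i ≡ j [MOD N] := by
  set gu : Fˣ := Units.mk0 g hg0 with hgu
  have h2 : (gu : F) = g := rfl
  have h1 : orderOf gu = N := by rw [← ho, ← h2, orderOf_units]
  have h3 : g ^ i = g ^ j ↔ gu ^ i = gu ^ j := by
    rw [Units.ext_iff, Units.val_pow_eq_pow_val, Units.val_pow_eq_pow_val, h2]
  rw [h3, pow_eq_pow_iff_modEq, h1]

end NT

/-- Lemma 3.4: the partial parallel classes `P_{gᵃ·uᵢ, ωᵇ}` for `0 ≤ a < t`,
`b ∈ {0,1,2}` and `uᵢ` ranging over chosen generators of the 1-dimensional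
subspaces contain every zero-sum non-collinear triple exactly once. -/
theorem Pclasses_cover_exactly_once (F : Type*) [Field F] [Fintype F]
    (t : ℕ) (hq : Fintype.card F = 6 * t + 1)
    (g : F) (hg : ∀ x : F, x ≠ 0 → ∃ k : ℕ, g ^ k = x)
    (n : ℕ) (hn : 2 ≤ n)
    (f : (L : Submodule F (Fin n → F)) → L →ₗ[F] L →ₗ[F] F)
    (halt : ∀ L : Submodule F (Fin n → F), Module.finrank F L = 2 →
      ∀ x, f L x x = 0)
    (hnd : ∀ L : Submodule F (Fin n → F), Module.finrank F L = 2 →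
      ∀ x, (∀ y, f L x y = 0) → x = 0)
    (gen : Submodule F (Fin n → F) → (Fin n → F))
    (hgen : ∀ K : Submodule F (Fin n → F), Module.finrank F K = 1 →
      gen K ∈ K ∧ gen K ≠ 0) :
    ∀ S : Set (Fin n → F),
      (∃ x y : Fin n → F, LinearIndependent F ![x, y] ∧ S = {x, y, -x - y}) →
      ∃! p : ℕ × ℕ × Submodule F (Fin n → F),
        p.1 < t ∧ p.2.1 < 3 ∧ Module.finrank F p.2.2 = 1 ∧
        S ∈ Pclass t g f (g ^ p.1 • gen p.2.2) ((g ^ (2 * t)) ^ p.2.1) := by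
  classical
  intro S hS0
  obtain ⟨x, y, hxy, hS⟩ := hS0
  -- scalar arithmetic facts
  have ht1 : 1 ≤ t := by
    have h2 : 1 < Fintype.card F := Fintype.one_lt_card
    omega
  have ht0 : 0 < t := ht1
  have h6t0 : 0 < 6 * t := by omega
  have hg0 : g ≠ 0 := g_ne_zero hq hg
  have hord : orderOf g = 6 * t := g_order hq hg
  have hpinj := pow_inj_iff hg0 hord
  have hpow1 : ∀ k : ℕ, g ^ k = 1 ↔ 6 * t ∣ k := by
    intro k
    rw [← hord]
    exact orderOf_dvd_iff_pow_eq_one.symm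
  set ω := g ^ (2 * t) with hωdef
  have hω1 : ω ≠ 1 := by
    intro h
    rw [hωdef, hpow1] at h
    have := Nat.le_of_dvd (by omega) h
    omega
  have hω3 : ω ^ 3 = 1 := by
    rw [hωdef, ← pow_mul, hpow1]
    exact ⟨1, by ring⟩
  have hsum : ω ^ 2 + ω + 1 = 0 := by
    have hf : (ω - 1) * (ω ^ 2 + ω + 1) = 0 := by linear_combination hω3
    rcases mul_eq_zero.mp hf with h | h
    · exact absurd (by linear_combination h) hω1
    · exact h
  have hneg : g ^ (3 * t) = -1 := by
    have h2 : g ^ (3 * t) * g ^ (3 * t) = 1 := by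
      rw [← pow_add, hpow1]; exact ⟨1, by ring⟩
    rcases mul_self_eq_one_iff.mp h2 with h | h
    · exfalso
      rw [hpow1] at h
      have := Nat.le_of_dvd (by omega) h
      omega
    · exact h
  -- geometric setup
  set u₀ := U0 ω x y with hu₀def
  set v₀ := V0 ω x y with hv₀def
  have e1 : u₀ + v₀ = x := E1 hsum hω1 x y
  have e2 : ω • u₀ + ω ^ 2 • v₀ = y := E2 hsum hω1 x y
  have e3 : ω ^ 2 • u₀ + ω • v₀ = -x - y := E3 hsum hω1 x y
  set L := Submodule.span F {x, y} with hLdef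
  have hxL : x ∈ L := Submodule.subset_span (by left; rfl)
  have hyL : y ∈ L := Submodule.subset_span (by right; rfl)
  have hu₀L : u₀ ∈ L := by
    rw [hu₀def, U0]
    exact Submodule.smul_mem _ _ (Submodule.sub_mem _ hyL (Submodule.smul_mem _ _ hxL))
  have hv₀L : v₀ ∈ L := by
    rw [hv₀def, V0]
    exact Submodule.smul_mem _ _ (Submodule.sub_mem _ (Submodule.smul_mem _ _ hxL) hyL)
  have hL2 : Module.finrank F L = 2 := by
    have hr : Set.range ![x, y] = {x, y} := by
      ext w
      simp [Matrix.range_cons, Matrix.range_empty]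
      tauto
    rw [hLdef, ← hr, finrank_span_eq_card hxy, Fintype.card_fin]
  have hu₀0 : u₀ ≠ 0 := by
    intro h
    rw [h, zero_add] at e1
    rw [h, smul_zero, zero_add] at e2
    exact coll hxy (show x = (1 : F) • v₀ by rw [one_smul, e1])
      (show y = ω ^ 2 • v₀ by rw [e2])
  have hv₀0 : v₀ ≠ 0 := by
    intro h
    rw [h, add_zero] at e1
    rw [h, smul_zero, add_zero] at e2
    exact coll hxy (show x = (1 : F) • u₀ by rw [one_smul, e1])
      (show y = ω • u₀ by rw [e2])
  have hmemL : ∀ w ∈ L, ∃ c d : F, w = c • u₀ + d • v₀ := by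
    intro w hw
    rw [hLdef] at hw
    obtain ⟨c, d, hcd⟩ := Submodule.mem_span_pair.mp hw
    refine ⟨c + d * ω, c + d * ω ^ 2, ?_⟩
    rw [← hcd, ← e1, ← e2]
    module
  -- the form value
  set lam := f L ⟨u₀, hu₀L⟩ ⟨v₀, hv₀L⟩ with hlam
  have hlam0 : lam ≠ 0 := by
    intro h0
    have hz : ∀ w : L, f L ⟨u₀, hu₀L⟩ w = 0 := by
      intro w
      obtain ⟨c, d, hcd⟩ := hmemL w.1 w.2
      have hw : w = c • (⟨u₀, hu₀L⟩ : L) + d • (⟨v₀, hv₀L⟩ : L) :=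
        Subtype.ext (by simp [hcd])
      rw [hw, map_add, map_smul, map_smul, halt L hL2, ← hlam, h0]
      simp
    have h1 := hnd L hL2 _ hz
    exact hu₀0 (by simpa using congrArg Subtype.val h1)
  have hantig : ∀ p q : L, f L p q = - f L q p := by
    intro p q
    have h := halt L hL2 (p + q)
    simp only [map_add, LinearMap.add_apply] at h
    rw [halt L hL2 p, halt L hL2 q] at h
    linear_combination h
  obtain ⟨kl, hkl⟩ := hg lam hlam0
  set sl := kl % (6 * t) with hsldef
  have hgsl : g ^ sl = lam := by
    rw [hsldef, ← hord, pow_mod_orderOf]; exact hkl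
  have hsl6 : sl < 6 * t := Nat.mod_lt _ h6t0
  have hdm : t * (sl / t) + sl % t = sl := Nat.div_add_mod sl t
  have hmlt : sl % t < t := Nat.mod_lt _ ht0
  have hel6 : sl / t < 6 := (Nat.div_lt_iff_lt_mul ht0).mpr (by omega)
  -- choose the line with even exponent class
  obtain ⟨U, V, hUmem, hVmem, hU0', hpair, s, hs6, hse, hfUV⟩ :
      ∃ (U V : Fin n → F) (_ : U ∈ L) (hVmem : V ∈ L), U ≠ 0 ∧
        ((U = u₀ ∧ V = v₀) ∨ (U = v₀ ∧ V = u₀)) ∧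
        ∃ s : ℕ, s < 6 * t ∧ (s / t) % 2 = 0 ∧
          ∀ (hU : U ∈ L), f L ⟨U, hU⟩ ⟨V, hVmem⟩ = g ^ s := by
    by_cases hpar : (sl / t) % 2 = 0
    · exact ⟨u₀, v₀, hu₀L, hv₀L, hu₀0, Or.inl ⟨rfl, rfl⟩, sl, hsl6, hpar,
        fun _ => by rw [← hlam]; exact hgsl.symm⟩
    · refine ⟨v₀, u₀, hv₀L, hu₀L, hv₀0, Or.inr ⟨rfl, rfl⟩,
        (sl + 3 * t) % (6 * t), Nat.mod_lt _ h6t0, ?_, ?_⟩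
      · have hrw : sl + 3 * t = sl % t + (sl / t + 3) * t := by
          have h := Nat.div_add_mod sl t
          generalize sl / t = e at h ⊢
          generalize sl % t = mm at h ⊢
          rw [← h]; ring
        rw [hrw, emod _ hmlt]
        have hq1 : (sl % t + (sl / t + 3) % 6 * t) / t = (sl / t + 3) % 6 := by
          rw [Nat.add_mul_div_right _ _ ht0, Nat.div_eq_of_lt hmlt, zero_add]
        rw [hq1]
        omega
      · intro hU
        have hv1 : f L ⟨v₀, hU⟩ ⟨u₀, hu₀L⟩ = - lam := by
          rw [hantig, ← hlam]
        rw [hv1]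
        rw [← hord, pow_mod_orderOf, pow_add, hgsl, hneg, mul_neg_one]
  have hfUV' := hfUV hUmem
  have hfVU : f L ⟨V, hVmem⟩ ⟨U, hUmem⟩ = - g ^ s := by
    rw [hantig, hfUV']
  -- define b and m
  set m := s % t with hmdef
  set b := s / t / 2 with hbdef
  have hst : t * (s / t) + m = s := Nat.div_add_mod s t
  have hstlt : s / t < 6 := (Nat.div_lt_iff_lt_mul ht0).mpr (by omega)
  have hb3 : b < 3 := by omega
  have hmt : m < t := Nat.mod_lt _ ht0
  have hsm : m + 2 * t * b = s := by
    have h2b : s / t = 2 * b := by omega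
    calc m + 2 * t * b = t * (2 * b) + m := by ring
      _ = t * (s / t) + m := by rw [← h2b]
      _ = s := hst
  -- the 1-dimensional subspace and exponent a
  set K := Submodule.span F {U} with hKdef
  have hK1 : Module.finrank F K = 1 := finrank_span_singleton hU0'
  obtain ⟨hγK, hγ0⟩ := hgen K hK1
  obtain ⟨d, hd⟩ := Submodule.mem_span_singleton.mp hγK
  have hd0 : d ≠ 0 := by
    intro h
    rw [h, zero_smul] at hd
    exact hγ0 hd.symm
  obtain ⟨kd, hkd⟩ := hg d hd0
  set r := kd % (6 * t) with hrdef
  have hgr : g ^ r = d := by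
    rw [hrdef, ← hord, pow_mod_orderOf]; exact hkd
  set a := (t - r % t) % t with hadef
  have ha : a < t := Nat.mod_lt _ ht0
  have hta : (a + r) % t = 0 := by
    have h1 : r % t < t := Nat.mod_lt _ ht0
    by_cases h0 : r % t = 0
    · have ha0 : a = 0 := by rw [hadef, h0, Nat.sub_zero, Nat.mod_self]
      rw [ha0, zero_add]
      exact h0
    · have ha' : a = t - r % t := by
        rw [hadef]; exact Nat.mod_eq_of_lt (by omega)
      rw [Nat.add_mod, Nat.mod_eq_of_lt (show a < t from ha), ha']
      have h2 : t - r % t + r % t = t := by omega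
      rw [h2, Nat.mod_self]
  set ζ := g ^ (a + r) with hζdef
  have hζ0 : ζ ≠ 0 := pow_ne_zero _ hg0
  have hζ6 : ζ ^ 6 = 1 := by
    rw [hζdef, ← pow_mul, hpow1]
    obtain ⟨k, hk⟩ := Nat.dvd_of_mod_eq_zero hta
    exact ⟨k, by rw [hk]; ring⟩
  have hζ3 : ζ ^ 3 = 1 ∨ ζ ^ 3 = -1 := by
    apply mul_self_eq_one_iff.mp
    have h36 : ζ ^ 3 * ζ ^ 3 = ζ ^ 6 := by ring
    rw [h36]; exact hζ6
  have hu'U : g ^ a • gen K = ζ • U := by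
    rw [← hd, smul_smul, ← hgr, ← pow_add, ← hζdef]
  have hu'L : g ^ a • gen K ∈ L := by
    rw [hu'U]; exact Submodule.smul_mem _ _ hUmem
  have hvL : ζ⁻¹ • V ∈ L := Submodule.smul_mem _ _ hVmem
  -- the triple identity
  have htrip : S = Ttriple ω (ζ • U) (ζ⁻¹ • V) ∨
      S = -Ttriple ω (ζ • U) (ζ⁻¹ • V) := by
    rcases hpair with ⟨hU, hV⟩ | ⟨hU, hV⟩ <;> rw [hU, hV]
    · rcases hζ3 with h3 | h3
      · left; rw [hS]; exact (rotgen hsum h3 e1 e2 e3).symm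
      · right; rw [hS]
        have hT := rotgen_neg hsum h3 e1 e2 e3
        rw [hT, ← negset, neg_neg]
    · have e1s : v₀ + u₀ = x := by rw [add_comm]; exact e1
      have e2s : ω • v₀ + ω ^ 2 • u₀ = -x - y := by rw [add_comm]; exact e3
      have e3s : ω ^ 2 • v₀ + ω • u₀ = y := by rw [add_comm]; exact e2
      rcases hζ3 with h3 | h3
      · left; rw [hS]
        rw [rotgen hsum h3 e1s e2s e3s, perm3c]
      · right; rw [hS]
        have hT := rotgen_neg hsum h3 e1s e2s e3s
        rw [hT, ← negset, neg_neg, perm3c]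
  -- the f-value at the candidate pair
  have hfval : f L ⟨g ^ a • gen K, hu'L⟩ ⟨ζ⁻¹ • V, hvL⟩ = g ^ m * ω ^ b := by
    have hs1 : (⟨g ^ a • gen K, hu'L⟩ : L) = ζ • (⟨U, hUmem⟩ : L) :=
      Subtype.ext (by simpa using hu'U)
    have hs2 : (⟨ζ⁻¹ • V, hvL⟩ : L) = ζ⁻¹ • (⟨V, hVmem⟩ : L) := rfl
    rw [hs1, hs2, bil_smul hζ0, hfUV', hωdef, ← pow_mul, ← pow_add, hsm]
  refine ⟨(a, b, K), ⟨ha, hb3, hK1, ?_⟩, ?_⟩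
  · -- membership in the Pclass
    simp only [Pclass, Set.mem_setOf_eq]
    refine ⟨L, hu'L, hL2, ⟨ζ⁻¹ • V, hvL⟩, ⟨m, hmt, hfval⟩, ?_⟩
    show S = Ttriple ω (g ^ a • gen K) (ζ⁻¹ • V) ∨
      S = -Ttriple ω (g ^ a • gen K) (ζ⁻¹ • V)
    rw [hu'U]
    exact htrip
  · -- uniqueness
    rintro ⟨a', b', K'⟩ ⟨ha', hb', hK'1, hmem'⟩
    replace ha' : a' < t := ha'
    replace hb' : b' < 3 := hb'
    replace hK'1 : Module.finrank F K' = 1 := hK'1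
    replace hmem' : S ∈ Pclass t g f (g ^ a' • gen K') (ω ^ b') := hmem'
    simp only [Pclass, Set.mem_setOf_eq] at hmem'
    obtain ⟨L', huL', hL'2, v, ⟨m', hm't, hfv⟩, hSor⟩ := hmem'
    -- identify L' with L
    have hTsub : ∀ w ∈ Ttriple ω (g ^ a' • gen K') (v : Fin n → F), w ∈ L' := by
      intro w hw
      have hu'' : g ^ a' • gen K' ∈ L' := huL'
      have hv'' : (v : Fin n → F) ∈ L' := v.2
      simp only [Ttriple, Set.mem_insert_iff, Set.mem_singleton_iff] at hw
      rcases hw with rfl | rfl | rfl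
      · exact add_mem hu'' hv''
      · exact add_mem (Submodule.smul_mem _ _ hu'') (Submodule.smul_mem _ _ hv'')
      · exact add_mem (Submodule.smul_mem _ _ hu'') (Submodule.smul_mem _ _ hv'')
    have hxyL' : x ∈ L' ∧ y ∈ L' := by
      rcases hSor with h | h
      · have hx : x ∈ Ttriple ω (g ^ a' • gen K') (v : Fin n → F) := by
          rw [← h, hS]; exact Set.mem_insert _ _
        have hy : y ∈ Ttriple ω (g ^ a' • gen K') (v : Fin n → F) := by
          rw [← h, hS]; exact Set.mem_insert_of_mem _ (Set.mem_insert _ _)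
        exact ⟨hTsub _ hx, hTsub _ hy⟩
      · have hx : x ∈ -Ttriple ω (g ^ a' • gen K') (v : Fin n → F) := by
          rw [← h, hS]; exact Set.mem_insert _ _
        have hy : y ∈ -Ttriple ω (g ^ a' • gen K') (v : Fin n → F) := by
          rw [← h, hS]; exact Set.mem_insert_of_mem _ (Set.mem_insert _ _)
        have hx' := hTsub _ (Set.mem_neg.mp hx)
        have hy' := hTsub _ (Set.mem_neg.mp hy)
        exact ⟨by simpa using neg_mem hx', by simpa using neg_mem hy'⟩
    have hLL' : L = L' := by
      apply Submodule.eq_of_le_of_finrank_eq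
      · rw [hLdef, Submodule.span_le]
        intro w hw
        rcases hw with rfl | hw
        · exact hxyL'.1
        · rw [Set.mem_singleton_iff] at hw; subst hw; exact hxyL'.2
      · rw [hL2, hL'2]
    subst hLL'
    -- extract the structure of the pair
    have hext : ∃ c : F, c ≠ 0 ∧ c ^ 6 = 1 ∧
        ((g ^ a' • gen K' = c • u₀ ∧ (v : Fin n → F) = c⁻¹ • v₀) ∨
         (g ^ a' • gen K' = c • v₀ ∧ (v : Fin n → F) = c⁻¹ • u₀)) := by
      rcases hSor with h | h
      · obtain ⟨c, hc3, hor⟩ := extract hsum hω1 hxy (h.symm.trans hS)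
        have hc0 : c ≠ 0 := by
          intro h0; rw [h0, zero_pow (by norm_num)] at hc3
          exact zero_ne_one hc3
        have hc6 : c ^ 6 = 1 := by
          have h62 : c ^ 6 = (c ^ 3) ^ 2 := by ring
          rw [h62, hc3, one_pow]
        rw [← hu₀def, ← hv₀def] at hor
        exact ⟨c, hc0, hc6, hor⟩
      · have hTneg : Ttriple ω (g ^ a' • gen K') (v : Fin n → F)
            = {-x, -y, -(-x) - -y} := by
          have h' : Ttriple ω (g ^ a' • gen K') (v : Fin n → F) = -S :=
            (neg_eq_iff_eq_neg.mpr h).symm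
          rw [h', hS, negset]
          have h3 : -(-x - y) = -(-x) - -y := by abel
          rw [h3]
        obtain ⟨c, hc3, hor⟩ := extract hsum hω1 (negind hxy) hTneg
        rw [U0neg, V0neg, ← hu₀def, ← hv₀def] at hor
        have hc0 : c ≠ 0 := by
          intro h0; rw [h0, zero_pow (by norm_num)] at hc3
          exact zero_ne_one hc3
        refine ⟨-c, neg_ne_zero.mpr hc0, ?_, ?_⟩
        · have h62 : (-c) ^ 6 = (c ^ 3) ^ 2 := by ring
          rw [h62, hc3, one_pow]
        · rcases hor with ⟨h1, h2⟩ | ⟨h1, h2⟩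
          · left
            constructor
            · rw [h1, smul_neg, neg_smul]
            · rw [h2, inv_neg, smul_neg, neg_smul]
          · right
            constructor
            · rw [h1, smul_neg, neg_smul]
            · rw [h2, inv_neg, smul_neg, neg_smul]
    obtain ⟨c, hc0, hc6, hor⟩ := hext
    have horUV : (g ^ a' • gen K' = c • U ∧ (v : Fin n → F) = c⁻¹ • V) ∨
        (g ^ a' • gen K' = c • V ∧ (v : Fin n → F) = c⁻¹ • U) := by
      rcases hpair with ⟨hU, hV⟩ | ⟨hU, hV⟩
      · rw [hU, hV]; exact hor
      · rw [hU, hV]; exact hor.symm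
    -- helper for exponent comparisons
    have hexpeq : ∀ A B : ℕ, g ^ A = g ^ B → A % (6 * t) = B % (6 * t) := by
      intro A B hAB
      exact (hpinj A B).mp hAB
    -- rule out the wrong line
    rcases horUV with ⟨h1, h2⟩ | ⟨h1, h2⟩
    · -- correct line
      have hfv' : f L ⟨g ^ a' • gen K', huL'⟩ v = g ^ s := by
        have hs1 : (⟨g ^ a' • gen K', huL'⟩ : L) = c • (⟨U, hUmem⟩ : L) :=
          Subtype.ext (by simpa using h1)
        have hs2 : v = c⁻¹ • (⟨V, hVmem⟩ : L) := Subtype.ext (by simpa using h2)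
        rw [hs1, hs2, bil_smul hc0, hfUV']
      have hexp : g ^ (m' + 2 * t * b') = g ^ s := by
        rw [pow_add, pow_mul, ← hωdef, ← hfv', hfv]
      have hmod := hexpeq _ _ hexp
      have hred1 : (m' + 2 * t * b') % (6 * t) = m' + 2 * b' % 6 * t := by
        have hsh : m' + 2 * t * b' = m' + (2 * b') * t := by ring
        rw [hsh, emod _ hm't]
      have hred2 : s % (6 * t) = s := Nat.mod_eq_of_lt hs6
      rw [hred1, hred2] at hmod
      have hb'2 : 2 * b' % 6 = 2 * b' := by omega
      rw [hb'2] at hmod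
      -- hmod : m' + 2 * b' * t = s ; hsm : m + 2 * t * b = s
      have hm'm : m' = m := by
        have hL1 : (m' + 2 * b' * t) % t = m' := by
          have hsh : m' + 2 * b' * t = m' + t * (2 * b') := by ring
          rw [hsh, Nat.add_mul_mod_self_left, Nat.mod_eq_of_lt hm't]
        have hR1 : s % t = m := hmdef.symm
        rw [← hL1, hmod, hR1]
      have hbb' : b' = b := by
        have e' : m + 2 * b' * t = m + 2 * b * t := by
          calc m + 2 * b' * t = m' + 2 * b' * t := by rw [hm'm]
            _ = s := hmod
            _ = m + 2 * t * b := hsm.symm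
            _ = m + 2 * b * t := by ring
        have hcanc : 2 * b' * t = 2 * b * t := Nat.add_left_cancel e'
        have := Nat.eq_of_mul_eq_mul_right ht0 hcanc
        omega
      -- K' = K
      have hKK' : K' = K := by
        obtain ⟨hgK', hg0'⟩ := hgen K' hK'1
        have h1' : gen K' = ((g ^ a')⁻¹ * c) • U := by
          have hstep : (g ^ a')⁻¹ • (g ^ a' • gen K') = (g ^ a')⁻¹ • (c • U) := by
            rw [h1]
          rwa [inv_smul_smul₀ (pow_ne_zero _ hg0), smul_smul] at hstep
        have he0 : (g ^ a')⁻¹ * c ≠ 0 :=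
          mul_ne_zero (inv_ne_zero (pow_ne_zero _ hg0)) hc0
        have hspan : K' = Submodule.span F {gen K'} := by
          refine (Submodule.eq_of_le_of_finrank_eq ?_ ?_).symm
          · rw [Submodule.span_le, Set.singleton_subset_iff]; exact hgK'
          · rw [finrank_span_singleton hg0', hK'1]
        rw [hspan, h1', hKdef]
        exact Submodule.span_singleton_smul_eq (isUnit_iff_ne_zero.mpr he0) U
      -- a' = a
      have haa : a' = a := by
        have h1K : g ^ a' • gen K = c • U := by rw [← hKK']; exact h1
        have h1U : g ^ (a' + r) • U = c • U := by
          rw [pow_add, hgr, ← smul_smul, hd, h1K]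
        have hcg : g ^ (a' + r) = c := by
          have h0 : (g ^ (a' + r) - c) • U = 0 := by rw [sub_smul, h1U, sub_self]
          rcases smul_eq_zero.mp h0 with h' | h'
          · exact sub_eq_zero.mp h'
          · exact absurd h' hU0'
        have h6 : g ^ (6 * (a' + r)) = 1 := by
          rw [mul_comm, pow_mul, hcg, hc6]
        have hdvd : 6 * t ∣ 6 * (a' + r) := (hpow1 _).mp h6
        have htd : t ∣ (a' + r) := by
          obtain ⟨k, hk⟩ := hdvd
          have hk' : 6 * (a' + r) = 6 * (t * k) := by rw [hk]; ring
          exact ⟨k, Nat.eq_of_mul_eq_mul_left (by norm_num) hk'⟩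
        have e1' : (a' + r) % t = 0 := by
          obtain ⟨k, hk⟩ := htd
          rw [hk, Nat.mul_mod_right]
        have hmodeq : a' ≡ a [MOD t] := by
          have hsum' : a' + r ≡ a + r [MOD t] := by
            unfold Nat.ModEq
            rw [e1', hta]
          exact Nat.ModEq.add_right_cancel' r hsum'
        have := hmodeq
        unfold Nat.ModEq at this
        rw [Nat.mod_eq_of_lt ha', Nat.mod_eq_of_lt ha] at this
        exact this
      simp only [Prod.mk.injEq]
      exact ⟨haa, hbb', hKK'⟩
    · -- wrong line : contradiction via the parity of the exponent
      exfalso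
      have hfv' : f L ⟨g ^ a' • gen K', huL'⟩ v = g ^ (s + 3 * t) := by
        have hs1 : (⟨g ^ a' • gen K', huL'⟩ : L) = c • (⟨V, hVmem⟩ : L) :=
          Subtype.ext (by simpa using h1)
        have hs2 : v = c⁻¹ • (⟨U, hUmem⟩ : L) := Subtype.ext (by simpa using h2)
        rw [hs1, hs2, bil_smul hc0, hfVU, pow_add, hneg, mul_neg_one]
      have hexp : g ^ (m' + 2 * t * b') = g ^ (s + 3 * t) := by
        rw [pow_add, pow_mul, ← hωdef, ← hfv', hfv]
      have hmod := hexpeq _ _ hexp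
      have hred1 : (m' + 2 * t * b') % (6 * t) = m' + 2 * b' % 6 * t := by
        have hsh : m' + 2 * t * b' = m' + (2 * b') * t := by ring
        rw [hsh, emod _ hm't]
      have hred2 : (s + 3 * t) % (6 * t) = m + (2 * b + 3) % 6 * t := by
        have hsh : s + 3 * t = m + (2 * b + 3) * t := by rw [← hsm]; ring
        rw [hsh, emod _ hmt]
      rw [hred1, hred2] at hmod
      have hb'2 : 2 * b' % 6 = 2 * b' := by omega
      rw [hb'2] at hmod
      have hm'm : m' = m := by
        have hL1 : (m' + 2 * b' * t) % t = m' := by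
          have hsh : m' + 2 * b' * t = m' + t * (2 * b') := by ring
          rw [hsh, Nat.add_mul_mod_self_left, Nat.mod_eq_of_lt hm't]
        have hR1 : (m + (2 * b + 3) % 6 * t) % t = m := by
          have hsh : m + (2 * b + 3) % 6 * t = m + t * ((2 * b + 3) % 6) := by ring
          rw [hsh, Nat.add_mul_mod_self_left, Nat.mod_eq_of_lt hmt]
        rw [← hL1, hmod, hR1]
      rw [hm'm] at hmod
      have hcanc : 2 * b' * t = (2 * b + 3) % 6 * t := by omega
      have hfin := Nat.eq_of_mul_eq_mul_right ht0 hcanc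
      omega
end
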